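/- arXiv:2405.09195 — 4 statements merged into one kernel-verified Lean document; each statement's English description precedes it below -/
import Mathlib

section
/- Let T > 0 and let a₁, a₂, b₁, b₂ ∈ (−1, ∞) satisfy a₁ + b₁ > −1 and a₂ + b₂ > −1. Then there exists a constant C = C(T, a₁, b₁, a₂, b₂) > 0 such that for every t ∈ [0, T] and every Borel measurable function f : [0, T] → [0, ∞), one has ∫₀ᵗ (t−s)^{a₁} s^{b₁} ( ∫₀ˢ (s−r)^{a₂} r^{b₂} f(r) dr ) ds ≤ C ( ∫₀ᵗ (t−s)^{a₁} s^{b₁} f(s) ds + ∫₀ᵗ (t−s)^{a₂} s^{b₂} f(s) ds ). -/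
open MeasureTheory Set intervalIntegral



lemma rpow_ratio_le {x y : ℝ} (c : ℝ) (hx : 0 < x) (hxy : x ≤ y) (h2 : y ≤ 2*x) :
    y ^ c ≤ 2 ^ |c| * x ^ c := by
  rcases le_or_gt 0 c with hc | hc
  · rw [abs_of_nonneg hc]
    calc y ^ c ≤ (2*x) ^ c := Real.rpow_le_rpow (hx.le.trans hxy) h2 hc
    _ = 2 ^ c * x ^ c := Real.mul_rpow (by norm_num) hx.le
  · rw [abs_of_neg hc]
    calc y ^ c ≤ x ^ c := Real.rpow_le_rpow_of_nonpos hx hxy hc.le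
    _ ≤ 2 ^ (-c) * x ^ c := by
        nlinarith [Real.one_le_rpow (by norm_num : (1:ℝ) ≤ 2) (neg_nonneg.2 hc.le), Real.rpow_pos_of_pos hx c]

lemma rpow_ratio_le' {x y : ℝ} (c : ℝ) (hx : 0 < x) (hxy : x ≤ y) (h2 : y ≤ 2*x) :
    x ^ c ≤ 2 ^ |c| * y ^ c := by
  have hy : 0 < y := hx.trans_le hxy
  rcases le_or_gt 0 c with hc | hc
  · rw [abs_of_nonneg hc]
    calc x ^ c ≤ y ^ c := Real.rpow_le_rpow hx.le hxy hc
    _ ≤ 2 ^ c * y ^ c := by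
        nlinarith [Real.one_le_rpow (by norm_num : (1:ℝ) ≤ 2) hc, Real.rpow_pos_of_pos hy c]
  · rw [abs_of_neg hc]
    calc x ^ c ≤ (y/2) ^ c := Real.rpow_le_rpow_of_nonpos (by linarith) (by linarith) hc.le
    _ = 2 ^ (-c) * y ^ c := by
        rw [Real.div_rpow hy.le (by norm_num), Real.rpow_neg (by norm_num)]
        field_simp


lemma lint_Ioo_rpow {c : ℝ} (hc : -1 < c) {B : ℝ} (hB : 0 ≤ B) :
    ∫⁻ s in Ioo (0:ℝ) B, ENNReal.ofReal (s ^ c) ≤ ENNReal.ofReal (B ^ (c+1) / (c+1)) := by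
  have hint : IntegrableOn (fun s : ℝ => s ^ c) (Ioo 0 B) volume := by
    have := (intervalIntegrable_iff_integrableOn_Ioc_of_le hB).1
      (intervalIntegral.intervalIntegrable_rpow' (a := 0) (b := B) hc)
    exact this.mono_set Ioo_subset_Ioc_self
  have hnn : 0 ≤ᵐ[volume.restrict (Ioo (0:ℝ) B)] fun s => s ^ c := by
    filter_upwards [ae_restrict_mem measurableSet_Ioo] with s hs
    exact Real.rpow_nonneg hs.1.le c
  rw [← ofReal_integral_eq_lintegral_ofReal hint hnn]
  apply ENNReal.ofReal_le_ofReal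
  have h1 : ∫ s in Ioo (0:ℝ) B, s ^ c = ∫ s in (0:ℝ)..B, s ^ c := by
    rw [intervalIntegral.integral_of_le hB, ← integral_Ioc_eq_integral_Ioo]
  rw [h1, integral_rpow (Or.inl hc), Real.zero_rpow (by linarith)]
  simp

lemma lint_Ioo_sub_rpow {c : ℝ} (hc : -1 < c) {A B : ℝ} (hAB : A ≤ B) :
    ∫⁻ s in Ioo A B, ENNReal.ofReal ((s - A) ^ c) ≤ ENNReal.ofReal ((B - A) ^ (c+1) / (c+1)) := by
  have hint : IntegrableOn (fun s : ℝ => (s - A) ^ c) (Ioo A B) volume := by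
    have h0 := intervalIntegral.intervalIntegrable_rpow' (a := 0) (b := B - A) hc
    have := (h0.comp_sub_right A)
    simp only [zero_add, sub_add_cancel] at this
    exact ((intervalIntegrable_iff_integrableOn_Ioc_of_le hAB).1 this).mono_set Ioo_subset_Ioc_self
  have hnn : 0 ≤ᵐ[volume.restrict (Ioo A B)] fun s => (s - A) ^ c := by
    filter_upwards [ae_restrict_mem measurableSet_Ioo] with s hs
    exact Real.rpow_nonneg (by linarith [hs.1]) c
  rw [← ofReal_integral_eq_lintegral_ofReal hint hnn]
  apply ENNReal.ofReal_le_ofReal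
  have h1 : ∫ s in Ioo A B, (s - A) ^ c = ∫ s in A..B, (s - A) ^ c := by
    rw [intervalIntegral.integral_of_le hAB, ← integral_Ioc_eq_integral_Ioo]
  rw [h1, intervalIntegral.integral_comp_sub_right (fun x => x ^ c) A, sub_self,
    integral_rpow (Or.inl hc), Real.zero_rpow (by linarith)]
  simp

lemma lint_Ioo_rsub_rpow {c : ℝ} (hc : -1 < c) {A B : ℝ} (hAB : A ≤ B) :
    ∫⁻ s in Ioo A B, ENNReal.ofReal ((B - s) ^ c) ≤ ENNReal.ofReal ((B - A) ^ (c+1) / (c+1)) := by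
  have hint : IntegrableOn (fun s : ℝ => (B - s) ^ c) (Ioo A B) volume := by
    have h0 := intervalIntegral.intervalIntegrable_rpow' (a := 0) (b := B - A) hc
    have h1 := h0.comp_sub_left B
    simp only [sub_sub_cancel, sub_zero] at h1
    exact ((intervalIntegrable_iff_integrableOn_Ioc_of_le hAB).1 h1.symm).mono_set Ioo_subset_Ioc_self
  have hnn : 0 ≤ᵐ[volume.restrict (Ioo A B)] fun s => (B - s) ^ c := by
    filter_upwards [ae_restrict_mem measurableSet_Ioo] with s hs
    exact Real.rpow_nonneg (by linarith [hs.2]) c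
  rw [← ofReal_integral_eq_lintegral_ofReal hint hnn]
  apply ENNReal.ofReal_le_ofReal
  have h1 : ∫ s in Ioo A B, (B - s) ^ c = ∫ s in A..B, (B - s) ^ c := by
    rw [intervalIntegral.integral_of_le hAB, ← integral_Ioc_eq_integral_Ioo]
  rw [h1, intervalIntegral.integral_comp_sub_left (fun x => x ^ c) B, sub_self,
    integral_rpow (Or.inl hc), Real.zero_rpow (by linarith)]
  simp

noncomputable def Mv (e : ℝ) : ℝ := (2:ℝ) ^ |e|

lemma Mv_one_le (e : ℝ) : 1 ≤ Mv e := Real.one_le_rpow (by norm_num) (abs_nonneg e)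
lemma Mv_pos (e : ℝ) : 0 < Mv e := lt_of_lt_of_le one_pos (Mv_one_le e)

section
variable {T a₁ a₂ b₁ b₂ : ℝ}

set_option maxHeartbeats 1000000 in
lemma kernel_bound (hT : 0 < T)
    (ha₁ : -1 < a₁) (ha₂ : -1 < a₂) (hb₁ : -1 < b₁) (hb₂ : -1 < b₂)
    (hab₁ : -1 < a₁ + b₁) (hab₂ : -1 < a₂ + b₂) :
    ∃ C : ℝ, 0 < C ∧ ∀ t, t ≤ T → ∀ r, 0 < r → r < t →
      (∫⁻ s in Ioo r t,
        ENNReal.ofReal ((t - s) ^ a₁ * s ^ b₁ * ((s - r) ^ a₂ * r ^ b₂))) ≤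
        ENNReal.ofReal C *
          (ENNReal.ofReal ((t - r) ^ a₁ * r ^ b₁) + ENNReal.ofReal ((t - r) ^ a₂ * r ^ b₂)) := by
  set ε : ℝ := (a₂ + b₂ + 1) / 2 with hε_def
  have hε : 0 < ε := by simp only [hε_def]; linarith
  set CA : ℝ := Mv a₁ * Mv b₁ * T ^ (a₂ + b₂ + 1) / (a₂ + 1) with hCA_def
  set CC : ℝ := Mv b₁ * Mv a₂ * T ^ (a₁ + b₁ + 1) / (a₁ + 1) with hCC_def
  set CB1 : ℝ := Mv a₁ * Mv a₂ * Mv (a₂ + b₁ + 1) * T ^ (a₁ + b₁ + 1) / (a₂ + b₁ + 1) with hCB1_def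
  set CB2 : ℝ := Mv a₁ * Mv a₂ * T ^ (a₂ + b₂ + 1) / ε with hCB2_def
  have hMa1 := Mv_pos a₁; have hMa2 := Mv_pos a₂; have hMb1 := Mv_pos b₁
  have hT1 : (0:ℝ) < T ^ (a₂ + b₂ + 1) := Real.rpow_pos_of_pos hT _
  have hT2 : (0:ℝ) < T ^ (a₁ + b₁ + 1) := Real.rpow_pos_of_pos hT _
  have hCA : 0 < CA := div_pos (by positivity) (by linarith)
  have hCC : 0 < CC := div_pos (by positivity) (by linarith)
  have hCB2 : 0 < CB2 := div_pos (by positivity) hε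
  refine ⟨CA + (|CB1| + CB2) + CC, by positivity, ?_⟩
  intro t htT r hr hrt
  have ht : 0 < t := hr.trans hrt
  set τ : ℝ := t - r with hτ_def
  have hτ : 0 < τ := by simp only [hτ_def]; linarith
  have hτt : τ ≤ t := by simp only [hτ_def]; linarith
  have hτT : τ ≤ T := le_trans hτt htT
  set m : ℝ := (r + t) / 2 with hm_def
  have hrm : r < m := by simp only [hm_def]; linarith
  have hmt : m < t := by simp only [hm_def]; linarith
  have htm : t - m = τ / 2 := by simp only [hm_def, hτ_def]; ring
  set x : ℝ := min m (2 * r) with hx_def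
  have hrx : r < x := lt_min hrm (by linarith)
  have hxm : x ≤ m := min_le_left _ _
  have hx2r : x ≤ 2 * r := min_le_right _ _
  set P := ENNReal.ofReal (τ ^ a₁ * r ^ b₁) + ENNReal.ofReal (τ ^ a₂ * r ^ b₂) with hP_def
  -- cover
  have hcover : Ioo r t ⊆ Ioo r x ∪ (Ico x m ∪ Ico m t) := by
    intro s hs
    rcases lt_or_ge s x with h | h
    · exact Or.inl ⟨hs.1, h⟩
    rcases lt_or_ge s m with h' | h'
    · exact Or.inr (Or.inl ⟨h, h'⟩)
    · exact Or.inr (Or.inr ⟨h', hs.2⟩)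
  set F : ℝ → ENNReal := fun s => ENNReal.ofReal ((t - s) ^ a₁ * s ^ b₁ * ((s - r) ^ a₂ * r ^ b₂))
    with hF_def
  -- Piece A
  have hA : (∫⁻ s in Ioo r x, F s) ≤ ENNReal.ofReal CA * P := by
    have hpt : ∀ s ∈ Ioo r x, F s ≤
        ENNReal.ofReal ((Mv a₁ * τ ^ a₁) * (Mv b₁ * r ^ b₁) * r ^ b₂) *
          ENNReal.ofReal ((s - r) ^ a₂) := by
      intro s hs
      have hsr : r < s := hs.1
      have hsx : s < x := hs.2
      have hst : s < t := lt_of_lt_of_le hsx (le_trans hxm hmt.le)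
      have h1 : (t - s) ^ a₁ ≤ Mv a₁ * τ ^ a₁ := by
        apply rpow_ratio_le' a₁ (by linarith) (by simp only [hτ_def]; linarith)
        have : s ≤ m := le_trans hsx.le hxm
        simp only [hm_def, hτ_def] at this ⊢; linarith
      have h2 : s ^ b₁ ≤ Mv b₁ * r ^ b₁ := by
        apply rpow_ratio_le b₁ hr hsr.le (by linarith [lt_of_lt_of_le hsx hx2r])
      rw [hF_def, ← ENNReal.ofReal_mul (by positivity)]
      apply ENNReal.ofReal_le_ofReal
      have e1 : (0:ℝ) ≤ (s - r) ^ a₂ := Real.rpow_nonneg (by linarith) _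
      have e2 : (0:ℝ) ≤ r ^ b₂ := Real.rpow_nonneg hr.le _
      have e3 : (0:ℝ) ≤ (t - s) ^ a₁ := Real.rpow_nonneg (by linarith) _
      have e4 : (0:ℝ) ≤ s ^ b₁ := Real.rpow_nonneg (by linarith) _
      calc (t - s) ^ a₁ * s ^ b₁ * ((s - r) ^ a₂ * r ^ b₂)
          ≤ (Mv a₁ * τ ^ a₁) * (Mv b₁ * r ^ b₁) * ((s - r) ^ a₂ * r ^ b₂) := by
            apply mul_le_mul_of_nonneg_right _ (by positivity)
            exact mul_le_mul h1 h2 e4 (by positivity)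
        _ = Mv a₁ * τ ^ a₁ * (Mv b₁ * r ^ b₁) * r ^ b₂ * (s - r) ^ a₂ := by ring
    calc (∫⁻ s in Ioo r x, F s)
        ≤ ∫⁻ s in Ioo r x, ENNReal.ofReal ((Mv a₁ * τ ^ a₁) * (Mv b₁ * r ^ b₁) * r ^ b₂) *
            ENNReal.ofReal ((s - r) ^ a₂) := setLIntegral_mono' measurableSet_Ioo hpt
      _ = ENNReal.ofReal ((Mv a₁ * τ ^ a₁) * (Mv b₁ * r ^ b₁) * r ^ b₂) *
            ∫⁻ s in Ioo r x, ENNReal.ofReal ((s - r) ^ a₂) :=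
          lintegral_const_mul' _ _ ENNReal.ofReal_ne_top
      _ ≤ ENNReal.ofReal ((Mv a₁ * τ ^ a₁) * (Mv b₁ * r ^ b₁) * r ^ b₂) *
            ENNReal.ofReal ((x - r) ^ (a₂ + 1) / (a₂ + 1)) := by
          gcongr
          exact lint_Ioo_sub_rpow ha₂ hrx.le
      _ ≤ ENNReal.ofReal (CA * (τ ^ a₁ * r ^ b₁)) := by
          rw [← ENNReal.ofReal_mul (by positivity)]
          apply ENNReal.ofReal_le_ofReal
          have key : r ^ b₂ * (x - r) ^ (a₂ + 1) ≤ T ^ (a₂ + b₂ + 1) := by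
            calc r ^ b₂ * (x - r) ^ (a₂ + 1) ≤ r ^ b₂ * r ^ (a₂ + 1) := by
                  apply mul_le_mul_of_nonneg_left _ (Real.rpow_nonneg hr.le _)
                  exact Real.rpow_le_rpow (by linarith) (by linarith) (by linarith)
              _ = r ^ (b₂ + (a₂ + 1)) := (Real.rpow_add hr _ _).symm
              _ ≤ T ^ (b₂ + (a₂ + 1)) := Real.rpow_le_rpow hr.le (by linarith) (by linarith)
              _ = T ^ (a₂ + b₂ + 1) := by ring_nf
          calc Mv a₁ * τ ^ a₁ * (Mv b₁ * r ^ b₁) * r ^ b₂ * ((x - r) ^ (a₂ + 1) / (a₂ + 1))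
              = (Mv a₁ * Mv b₁ / (a₂ + 1)) * (τ ^ a₁ * r ^ b₁) * (r ^ b₂ * (x - r) ^ (a₂ + 1)) := by
                ring
            _ ≤ (Mv a₁ * Mv b₁ / (a₂ + 1)) * (τ ^ a₁ * r ^ b₁) * T ^ (a₂ + b₂ + 1) := by
                apply mul_le_mul_of_nonneg_left key
                have h1 : (0:ℝ) ≤ τ ^ a₁ * r ^ b₁ := by positivity
                have h2 : (0:ℝ) ≤ Mv a₁ * Mv b₁ / (a₂ + 1) := by
                  apply div_nonneg (by positivity) (by linarith)
                exact mul_nonneg h2 h1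
            _ = CA * (τ ^ a₁ * r ^ b₁) := by rw [hCA_def]; ring
      _ ≤ ENNReal.ofReal CA * P := by
          rw [ENNReal.ofReal_mul hCA.le, hP_def]
          exact mul_le_mul_right le_self_add _
  -- Piece C
  have hC : (∫⁻ s in Ico m t, F s) ≤ ENNReal.ofReal CC * P := by
    have hpt : ∀ s ∈ Ico m t, F s ≤
        ENNReal.ofReal ((Mv b₁ * t ^ b₁) * (Mv a₂ * τ ^ a₂) * r ^ b₂) *
          ENNReal.ofReal ((t - s) ^ a₁) := by
      intro s hs
      have hms : m ≤ s := hs.1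
      have hst : s < t := hs.2
      have hrs : r < s := lt_of_lt_of_le hrm hms
      have h1 : s ^ b₁ ≤ Mv b₁ * t ^ b₁ := by
        apply rpow_ratio_le' b₁ (by linarith) hst.le
        simp only [hm_def] at hms; linarith
      have h2 : (s - r) ^ a₂ ≤ Mv a₂ * τ ^ a₂ := by
        apply rpow_ratio_le' a₂ (by linarith) (by simp only [hτ_def]; linarith)
        simp only [hm_def] at hms
        simp only [hτ_def]; linarith
      rw [hF_def, ← ENNReal.ofReal_mul (by positivity)]
      apply ENNReal.ofReal_le_ofReal
      have e1 : (0:ℝ) ≤ (s - r) ^ a₂ := Real.rpow_nonneg (by linarith) _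
      have e2 : (0:ℝ) ≤ r ^ b₂ := Real.rpow_nonneg hr.le _
      have e3 : (0:ℝ) ≤ (t - s) ^ a₁ := Real.rpow_nonneg (by linarith) _
      have e4 : (0:ℝ) ≤ s ^ b₁ := Real.rpow_nonneg (by linarith) _
      calc (t - s) ^ a₁ * s ^ b₁ * ((s - r) ^ a₂ * r ^ b₂)
          = s ^ b₁ * (s - r) ^ a₂ * (r ^ b₂ * (t - s) ^ a₁) := by ring
        _ ≤ (Mv b₁ * t ^ b₁) * (Mv a₂ * τ ^ a₂) * (r ^ b₂ * (t - s) ^ a₁) := by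
            apply mul_le_mul_of_nonneg_right _ (by positivity)
            exact mul_le_mul h1 h2 e1 (by positivity)
        _ = (Mv b₁ * t ^ b₁) * (Mv a₂ * τ ^ a₂) * r ^ b₂ * (t - s) ^ a₁ := by ring
    calc (∫⁻ s in Ico m t, F s)
        ≤ ∫⁻ s in Ico m t, ENNReal.ofReal ((Mv b₁ * t ^ b₁) * (Mv a₂ * τ ^ a₂) * r ^ b₂) *
            ENNReal.ofReal ((t - s) ^ a₁) := setLIntegral_mono' measurableSet_Ico hpt
      _ = ENNReal.ofReal ((Mv b₁ * t ^ b₁) * (Mv a₂ * τ ^ a₂) * r ^ b₂) *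
            ∫⁻ s in Ico m t, ENNReal.ofReal ((t - s) ^ a₁) :=
          lintegral_const_mul' _ _ ENNReal.ofReal_ne_top
      _ ≤ ENNReal.ofReal ((Mv b₁ * t ^ b₁) * (Mv a₂ * τ ^ a₂) * r ^ b₂) *
            ENNReal.ofReal ((t - m) ^ (a₁ + 1) / (a₁ + 1)) := by
          gcongr
          rw [← setLIntegral_congr (Ioo_ae_eq_Ico (a := m) (b := t))]
          exact lint_Ioo_rsub_rpow ha₁ hmt.le
      _ ≤ ENNReal.ofReal (CC * (τ ^ a₂ * r ^ b₂)) := by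
          rw [← ENNReal.ofReal_mul (by positivity)]
          apply ENNReal.ofReal_le_ofReal
          have key : t ^ b₁ * (t - m) ^ (a₁ + 1) ≤ T ^ (a₁ + b₁ + 1) := by
            calc t ^ b₁ * (t - m) ^ (a₁ + 1) ≤ t ^ b₁ * t ^ (a₁ + 1) := by
                  apply mul_le_mul_of_nonneg_left _ (Real.rpow_nonneg ht.le _)
                  apply Real.rpow_le_rpow (by linarith) (by linarith) (by linarith)
              _ = t ^ (b₁ + (a₁ + 1)) := (Real.rpow_add ht _ _).symm
              _ ≤ T ^ (b₁ + (a₁ + 1)) := Real.rpow_le_rpow ht.le htT (by linarith)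
              _ = T ^ (a₁ + b₁ + 1) := by ring_nf
          calc Mv b₁ * t ^ b₁ * (Mv a₂ * τ ^ a₂) * r ^ b₂ * ((t - m) ^ (a₁ + 1) / (a₁ + 1))
              = (Mv b₁ * Mv a₂ / (a₁ + 1)) * (τ ^ a₂ * r ^ b₂) * (t ^ b₁ * (t - m) ^ (a₁ + 1)) := by
                ring
            _ ≤ (Mv b₁ * Mv a₂ / (a₁ + 1)) * (τ ^ a₂ * r ^ b₂) * T ^ (a₁ + b₁ + 1) := by
                apply mul_le_mul_of_nonneg_left key
                have h1 : (0:ℝ) ≤ τ ^ a₂ * r ^ b₂ := by positivity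
                have h2 : (0:ℝ) ≤ Mv b₁ * Mv a₂ / (a₁ + 1) :=
                  div_nonneg (by positivity) (by linarith)
                exact mul_nonneg h2 h1
            _ = CC * (τ ^ a₂ * r ^ b₂) := by rw [hCC_def]; ring
      _ ≤ ENNReal.ofReal CC * P := by
          rw [ENNReal.ofReal_mul hCC.le, hP_def]
          exact mul_le_mul_right le_add_self _
  -- Piece B
  have hB : (∫⁻ s in Ico x m, F s) ≤ ENNReal.ofReal (|CB1| + CB2) * P := by
    rcases le_or_gt m (2 * r) with hcase0 | hcase0
    · have hxeq : x = m := min_eq_left hcase0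
      rw [hxeq]
      simp [Ico_self]
    · have hxeq : x = 2 * r := min_eq_right hcase0.le
      have h2rt : 2 * r < t := lt_trans hcase0 hmt
      have ht2τ : t ≤ 2 * τ := by simp only [hτ_def]; linarith
      rcases lt_or_ge 0 (a₂ + b₁ + 1) with hc1 | hc1
      · -- case a₂ + b₁ + 1 > 0
        have hpt : ∀ s ∈ Ico x m, F s ≤
            ENNReal.ofReal ((Mv a₁ * τ ^ a₁) * Mv a₂ * r ^ b₂) *
              ENNReal.ofReal (s ^ (a₂ + b₁)) := by
          intro s hs
          rw [hxeq] at hs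
          have hs2r : 2 * r ≤ s := hs.1
          have hsm : s < m := hs.2
          have hs0 : 0 < s := by linarith
          have hrs : r < s := by linarith
          have hst : s < t := lt_trans hsm hmt
          have h1 : (t - s) ^ a₁ ≤ Mv a₁ * τ ^ a₁ := by
            apply rpow_ratio_le' a₁ (by linarith) (by simp only [hτ_def]; linarith)
            simp only [hm_def] at hsm
            simp only [hτ_def]; linarith
          have h2 : (s - r) ^ a₂ ≤ Mv a₂ * s ^ a₂ := by
            apply rpow_ratio_le' a₂ (by linarith) (by linarith) (by linarith)
          rw [hF_def, ← ENNReal.ofReal_mul (by positivity)]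
          apply ENNReal.ofReal_le_ofReal
          have e1 : (0:ℝ) ≤ (s - r) ^ a₂ := Real.rpow_nonneg (by linarith) _
          have e2 : (0:ℝ) ≤ r ^ b₂ := Real.rpow_nonneg hr.le _
          have e3 : (0:ℝ) ≤ (t - s) ^ a₁ := Real.rpow_nonneg (by linarith) _
          have e4 : (0:ℝ) ≤ s ^ b₁ := Real.rpow_nonneg hs0.le _
          calc (t - s) ^ a₁ * s ^ b₁ * ((s - r) ^ a₂ * r ^ b₂)
              = (t - s) ^ a₁ * (s - r) ^ a₂ * (s ^ b₁ * r ^ b₂) := by ring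
            _ ≤ (Mv a₁ * τ ^ a₁) * (Mv a₂ * s ^ a₂) * (s ^ b₁ * r ^ b₂) := by
                apply mul_le_mul_of_nonneg_right _ (by positivity)
                exact mul_le_mul h1 h2 e1 (by positivity)
            _ = (Mv a₁ * τ ^ a₁) * Mv a₂ * r ^ b₂ * (s ^ a₂ * s ^ b₁) := by ring
            _ = (Mv a₁ * τ ^ a₁) * Mv a₂ * r ^ b₂ * s ^ (a₂ + b₁) := by
                rw [← Real.rpow_add hs0]
        calc (∫⁻ s in Ico x m, F s)
            ≤ ∫⁻ s in Ico x m, ENNReal.ofReal ((Mv a₁ * τ ^ a₁) * Mv a₂ * r ^ b₂) *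
                ENNReal.ofReal (s ^ (a₂ + b₁)) := setLIntegral_mono' measurableSet_Ico hpt
          _ = ENNReal.ofReal ((Mv a₁ * τ ^ a₁) * Mv a₂ * r ^ b₂) *
                ∫⁻ s in Ico x m, ENNReal.ofReal (s ^ (a₂ + b₁)) :=
              lintegral_const_mul' _ _ ENNReal.ofReal_ne_top
          _ ≤ ENNReal.ofReal ((Mv a₁ * τ ^ a₁) * Mv a₂ * r ^ b₂) *
                ENNReal.ofReal (m ^ ((a₂ + b₁) + 1) / ((a₂ + b₁) + 1)) := by
              gcongr
              refine le_trans (lintegral_mono_set ?_) (lint_Ioo_rpow (by linarith) (by linarith))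
              intro s hs
              rw [hxeq] at hs
              exact ⟨by linarith [hs.1], hs.2⟩
          _ ≤ ENNReal.ofReal (|CB1| * (τ ^ a₂ * r ^ b₂)) := by
              rw [← ENNReal.ofReal_mul (by positivity)]
              apply ENNReal.ofReal_le_ofReal
              have key : τ ^ a₁ * m ^ ((a₂ + b₁) + 1) ≤
                  Mv (a₂ + b₁ + 1) * T ^ (a₁ + b₁ + 1) * τ ^ a₂ := by
                have s1 : m ^ ((a₂ + b₁) + 1) ≤ t ^ ((a₂ + b₁) + 1) :=
                  Real.rpow_le_rpow (by linarith) hmt.le (by linarith)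
                have s2 : t ^ ((a₂ + b₁) + 1) ≤ Mv (a₂ + b₁ + 1) * τ ^ ((a₂ + b₁) + 1) := by
                  have := rpow_ratio_le (a₂ + b₁ + 1) hτ hτt ht2τ
                  calc t ^ ((a₂ + b₁) + 1) = t ^ (a₂ + b₁ + 1) := by ring_nf
                    _ ≤ Mv (a₂ + b₁ + 1) * τ ^ (a₂ + b₁ + 1) := this
                    _ = Mv (a₂ + b₁ + 1) * τ ^ ((a₂ + b₁) + 1) := by ring_nf
                calc τ ^ a₁ * m ^ ((a₂ + b₁) + 1)
                    ≤ τ ^ a₁ * (Mv (a₂ + b₁ + 1) * τ ^ ((a₂ + b₁) + 1)) := by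
                      apply mul_le_mul_of_nonneg_left (le_trans s1 s2) (Real.rpow_nonneg hτ.le _)
                  _ = Mv (a₂ + b₁ + 1) * (τ ^ a₁ * τ ^ ((a₂ + b₁) + 1)) := by ring
                  _ = Mv (a₂ + b₁ + 1) * (τ ^ a₂ * τ ^ (a₁ + b₁ + 1)) := by
                      rw [← Real.rpow_add hτ, ← Real.rpow_add hτ]
                      ring_nf
                  _ ≤ Mv (a₂ + b₁ + 1) * (τ ^ a₂ * T ^ (a₁ + b₁ + 1)) := by
                      apply mul_le_mul_of_nonneg_left _ (Mv_pos _).le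
                      apply mul_le_mul_of_nonneg_left _ (Real.rpow_nonneg hτ.le _)
                      exact Real.rpow_le_rpow hτ.le hτT (by linarith)
                  _ = Mv (a₂ + b₁ + 1) * T ^ (a₁ + b₁ + 1) * τ ^ a₂ := by ring
              calc Mv a₁ * τ ^ a₁ * Mv a₂ * r ^ b₂ * (m ^ ((a₂ + b₁) + 1) / ((a₂ + b₁) + 1))
                  = (Mv a₁ * Mv a₂ / (a₂ + b₁ + 1)) * r ^ b₂ * (τ ^ a₁ * m ^ ((a₂ + b₁) + 1)) := by
                    ring_nf
                _ ≤ (Mv a₁ * Mv a₂ / (a₂ + b₁ + 1)) * r ^ b₂ *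
                      (Mv (a₂ + b₁ + 1) * T ^ (a₁ + b₁ + 1) * τ ^ a₂) := by
                    apply mul_le_mul_of_nonneg_left key
                    have h2 : (0:ℝ) ≤ Mv a₁ * Mv a₂ / (a₂ + b₁ + 1) :=
                      div_nonneg (by positivity) hc1.le
                    have e2 : (0:ℝ) ≤ r ^ b₂ := Real.rpow_nonneg hr.le _
                    exact mul_nonneg h2 e2
                _ = CB1 * (τ ^ a₂ * r ^ b₂) := by rw [hCB1_def]; ring
                _ ≤ |CB1| * (τ ^ a₂ * r ^ b₂) := by
                    apply mul_le_mul_of_nonneg_right (le_abs_self _) (by positivity)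
          _ ≤ ENNReal.ofReal (|CB1| + CB2) * P := by
              rw [ENNReal.ofReal_mul (abs_nonneg _), hP_def]
              exact mul_le_mul' (ENNReal.ofReal_le_ofReal (by linarith)) le_add_self
      · -- case a₂ + b₁ + 1 ≤ 0
        have hpt : ∀ s ∈ Ico x m, F s ≤
            ENNReal.ofReal ((Mv a₁ * τ ^ a₁) * Mv a₂ * r ^ b₂ * r ^ (a₂ + b₁ + 1 - ε)) *
              ENNReal.ofReal (s ^ (ε - 1)) := by
          intro s hs
          rw [hxeq] at hs
          have hs2r : 2 * r ≤ s := hs.1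
          have hsm : s < m := hs.2
          have hs0 : 0 < s := by linarith
          have hrs : r < s := by linarith
          have hst : s < t := lt_trans hsm hmt
          have h1 : (t - s) ^ a₁ ≤ Mv a₁ * τ ^ a₁ := by
            apply rpow_ratio_le' a₁ (by linarith) (by simp only [hτ_def]; linarith)
            simp only [hm_def] at hsm
            simp only [hτ_def]; linarith
          have h2 : (s - r) ^ a₂ ≤ Mv a₂ * s ^ a₂ := by
            apply rpow_ratio_le' a₂ (by linarith) (by linarith) (by linarith)
          have h3 : s ^ (a₂ + b₁) ≤ r ^ (a₂ + b₁ + 1 - ε) * s ^ (ε - 1) := by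
            have hexp : a₂ + b₁ + 1 - ε ≤ 0 := by linarith
            have e1 : s ^ (a₂ + b₁) = s ^ (ε - 1) * s ^ (a₂ + b₁ + 1 - ε) := by
              rw [← Real.rpow_add hs0, show ε - 1 + (a₂ + b₁ + 1 - ε) = a₂ + b₁ by ring]
            rw [e1, mul_comm]
            apply mul_le_mul_of_nonneg_right _ (Real.rpow_nonneg hs0.le _)
            calc s ^ (a₂ + b₁ + 1 - ε) ≤ (2 * r) ^ (a₂ + b₁ + 1 - ε) :=
                  Real.rpow_le_rpow_of_nonpos (by linarith) hs2r hexp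
              _ ≤ r ^ (a₂ + b₁ + 1 - ε) :=
                  Real.rpow_le_rpow_of_nonpos hr (by linarith) hexp
          rw [hF_def, ← ENNReal.ofReal_mul (by positivity)]
          apply ENNReal.ofReal_le_ofReal
          have e1 : (0:ℝ) ≤ (s - r) ^ a₂ := Real.rpow_nonneg (by linarith) _
          have e2 : (0:ℝ) ≤ r ^ b₂ := Real.rpow_nonneg hr.le _
          have e3 : (0:ℝ) ≤ (t - s) ^ a₁ := Real.rpow_nonneg (by linarith) _
          have e4 : (0:ℝ) ≤ s ^ b₁ := Real.rpow_nonneg hs0.le _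
          calc (t - s) ^ a₁ * s ^ b₁ * ((s - r) ^ a₂ * r ^ b₂)
              = (t - s) ^ a₁ * (s - r) ^ a₂ * (s ^ b₁ * r ^ b₂) := by ring
            _ ≤ (Mv a₁ * τ ^ a₁) * (Mv a₂ * s ^ a₂) * (s ^ b₁ * r ^ b₂) := by
                apply mul_le_mul_of_nonneg_right _ (by positivity)
                exact mul_le_mul h1 h2 e1 (by positivity)
            _ = (Mv a₁ * τ ^ a₁) * Mv a₂ * r ^ b₂ * (s ^ a₂ * s ^ b₁) := by ring
            _ = (Mv a₁ * τ ^ a₁) * Mv a₂ * r ^ b₂ * s ^ (a₂ + b₁) := by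
                rw [← Real.rpow_add hs0]
            _ ≤ (Mv a₁ * τ ^ a₁) * Mv a₂ * r ^ b₂ * (r ^ (a₂ + b₁ + 1 - ε) * s ^ (ε - 1)) := by
                apply mul_le_mul_of_nonneg_left h3
                positivity
            _ = (Mv a₁ * τ ^ a₁) * Mv a₂ * r ^ b₂ * r ^ (a₂ + b₁ + 1 - ε) * s ^ (ε - 1) := by
                ring
        calc (∫⁻ s in Ico x m, F s)
            ≤ ∫⁻ s in Ico x m,
                ENNReal.ofReal ((Mv a₁ * τ ^ a₁) * Mv a₂ * r ^ b₂ * r ^ (a₂ + b₁ + 1 - ε)) *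
                ENNReal.ofReal (s ^ (ε - 1)) := setLIntegral_mono' measurableSet_Ico hpt
          _ = ENNReal.ofReal ((Mv a₁ * τ ^ a₁) * Mv a₂ * r ^ b₂ * r ^ (a₂ + b₁ + 1 - ε)) *
                ∫⁻ s in Ico x m, ENNReal.ofReal (s ^ (ε - 1)) :=
              lintegral_const_mul' _ _ ENNReal.ofReal_ne_top
          _ ≤ ENNReal.ofReal ((Mv a₁ * τ ^ a₁) * Mv a₂ * r ^ b₂ * r ^ (a₂ + b₁ + 1 - ε)) *
                ENNReal.ofReal (m ^ ((ε - 1) + 1) / ((ε - 1) + 1)) := by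
              gcongr
              refine le_trans (lintegral_mono_set ?_) (lint_Ioo_rpow (by linarith) (by linarith))
              intro s hs
              rw [hxeq] at hs
              exact ⟨by linarith [hs.1], hs.2⟩
          _ ≤ ENNReal.ofReal (CB2 * (τ ^ a₁ * r ^ b₁)) := by
              rw [← ENNReal.ofReal_mul (by positivity)]
              apply ENNReal.ofReal_le_ofReal
              have k1 : r ^ b₂ * r ^ (a₂ + b₁ + 1 - ε) = r ^ b₁ * r ^ ε := by
                rw [← Real.rpow_add hr, ← Real.rpow_add hr]
                congr 1
                simp only [hε_def]; ring
              have k2 : r ^ ε ≤ T ^ ε :=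
                Real.rpow_le_rpow hr.le (by linarith) hε.le
              have k3 : m ^ ((ε - 1) + 1) ≤ T ^ ε := by
                rw [show (ε - 1) + 1 = ε by ring]
                exact Real.rpow_le_rpow (by linarith) (by linarith) hε.le
              have k4 : T ^ ε * T ^ ε = T ^ (a₂ + b₂ + 1) := by
                rw [← Real.rpow_add hT]
                congr 1
                simp only [hε_def]; ring
              have hd : (ε - 1) + 1 = ε := by ring
              calc Mv a₁ * τ ^ a₁ * Mv a₂ * r ^ b₂ * r ^ (a₂ + b₁ + 1 - ε) *
                    (m ^ ((ε - 1) + 1) / ((ε - 1) + 1))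
                  = (Mv a₁ * Mv a₂ / ε) * τ ^ a₁ *
                      ((r ^ b₂ * r ^ (a₂ + b₁ + 1 - ε)) * m ^ ((ε - 1) + 1)) := by
                    rw [hd]; ring
                _ = (Mv a₁ * Mv a₂ / ε) * τ ^ a₁ * (r ^ b₁ * (r ^ ε * m ^ ((ε - 1) + 1))) := by
                    rw [k1]; ring
                _ ≤ (Mv a₁ * Mv a₂ / ε) * τ ^ a₁ * (r ^ b₁ * (T ^ ε * T ^ ε)) := by
                    apply mul_le_mul_of_nonneg_left _ (by positivity)
                    apply mul_le_mul_of_nonneg_left _ (Real.rpow_nonneg hr.le _)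
                    apply mul_le_mul k2 k3 (Real.rpow_nonneg (by linarith) _)
                      (Real.rpow_nonneg hT.le _)
                _ = CB2 * (τ ^ a₁ * r ^ b₁) := by rw [k4, hCB2_def]; ring
          _ ≤ ENNReal.ofReal (|CB1| + CB2) * P := by
              rw [ENNReal.ofReal_mul hCB2.le, hP_def]
              exact mul_le_mul' (ENNReal.ofReal_le_ofReal (by
                have := abs_nonneg CB1; linarith)) le_self_add
  -- assembly
  calc (∫⁻ s in Ioo r t, F s)
      ≤ ∫⁻ s in Ioo r x ∪ (Ico x m ∪ Ico m t), F s := lintegral_mono_set hcover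
    _ ≤ (∫⁻ s in Ioo r x, F s) + ((∫⁻ s in Ico x m, F s) + (∫⁻ s in Ico m t, F s)) := by
        refine le_trans (lintegral_union_le _ _ _) ?_
        gcongr
        exact lintegral_union_le _ _ _
    _ ≤ ENNReal.ofReal CA * P + (ENNReal.ofReal (|CB1| + CB2) * P + ENNReal.ofReal CC * P) :=
        add_le_add hA (add_le_add hB hC)
    _ = (ENNReal.ofReal CA + (ENNReal.ofReal (|CB1| + CB2) + ENNReal.ofReal CC)) * P := by
        ring
    _ = ENNReal.ofReal (CA + (|CB1| + CB2) + CC) * P := by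
        rw [← ENNReal.ofReal_add (by positivity) hCC.le,
          ← ENNReal.ofReal_add hCA.le (by positivity)]
        ring_nf

end

set_option maxHeartbeats 1000000 in
/-- composition of two singular Volterra kernels is bounded by the sum
of the individual kernel integrals. -/
theorem volterra_kernel_composition
    (T : ℝ) (hT : 0 < T) (a₁ a₂ b₁ b₂ : ℝ)
    (ha₁ : -1 < a₁) (ha₂ : -1 < a₂) (hb₁ : -1 < b₁) (hb₂ : -1 < b₂)
    (hab₁ : -1 < a₁ + b₁) (hab₂ : -1 < a₂ + b₂) :
    ∃ C : ℝ, 0 < C ∧ ∀ t ∈ Icc (0 : ℝ) T, ∀ f : ℝ → ℝ,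
      Measurable f → (∀ s, 0 ≤ f s) →
      (∫⁻ s in Ioo (0 : ℝ) t, ENNReal.ofReal ((t - s) ^ a₁ * s ^ b₁) *
          ∫⁻ r in Ioo (0 : ℝ) s, ENNReal.ofReal ((s - r) ^ a₂ * r ^ b₂ * f r)) ≤
        ENNReal.ofReal C *
          ((∫⁻ s in Ioo (0 : ℝ) t, ENNReal.ofReal ((t - s) ^ a₁ * s ^ b₁ * f s)) +
            ∫⁻ s in Ioo (0 : ℝ) t, ENNReal.ofReal ((t - s) ^ a₂ * s ^ b₂ * f s)) := by
  obtain ⟨C, hC, hker⟩ := kernel_bound hT ha₁ ha₂ hb₁ hb₂ hab₁ hab₂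
  refine ⟨C, hC, ?_⟩
  rintro t ⟨ht0, htT⟩ f hf hf0
  set G : ℝ × ℝ → ENNReal := fun q =>
    {q : ℝ × ℝ | q.2 < q.1}.indicator
      (fun q => ENNReal.ofReal ((t - q.1) ^ a₁ * q.1 ^ b₁) *
        ENNReal.ofReal ((q.1 - q.2) ^ a₂ * q.2 ^ b₂ * f q.2)) q with hG_def
  have hGmeas : Measurable G := by
    apply Measurable.indicator _ (measurableSet_lt measurable_snd measurable_fst)
    fun_prop
  have step1 : (∫⁻ s in Ioo (0 : ℝ) t, ENNReal.ofReal ((t - s) ^ a₁ * s ^ b₁) *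
      ∫⁻ r in Ioo (0 : ℝ) s, ENNReal.ofReal ((s - r) ^ a₂ * r ^ b₂ * f r)) =
      ∫⁻ s in Ioo (0 : ℝ) t, ∫⁻ r in Ioo (0 : ℝ) t, G (s, r) := by
    apply setLIntegral_congr_fun measurableSet_Ioo
    intro s hs
    beta_reduce
    have hGr : ∀ r, G (s, r) = (Iio s).indicator
        (fun r => ENNReal.ofReal ((t - s) ^ a₁ * s ^ b₁) *
          ENNReal.ofReal ((s - r) ^ a₂ * r ^ b₂ * f r)) r := by
      intro r
      simp only [hG_def, indicator_apply, mem_setOf_eq, mem_Iio]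
    simp only [hGr]
    rw [lintegral_indicator measurableSet_Iio, Measure.restrict_restrict measurableSet_Iio]
    have hset : Iio s ∩ Ioo (0:ℝ) t = Ioo 0 s := by
      ext r
      simp only [mem_inter_iff, mem_Iio, mem_Ioo]
      constructor
      · rintro ⟨h1, h2, h3⟩; exact ⟨h2, h1⟩
      · rintro ⟨h1, h2⟩; exact ⟨h2, h1, lt_trans h2 hs.2⟩
    rw [hset, lintegral_const_mul' _ _ ENNReal.ofReal_ne_top]
  have step2 : (∫⁻ s in Ioo (0 : ℝ) t, ∫⁻ r in Ioo (0 : ℝ) t, G (s, r)) =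
      ∫⁻ r in Ioo (0 : ℝ) t, ∫⁻ s in Ioo (0 : ℝ) t, G (s, r) :=
    lintegral_lintegral_swap hGmeas.aemeasurable
  have step3 : ∀ r ∈ Ioo (0:ℝ) t, (∫⁻ s in Ioo (0 : ℝ) t, G (s, r)) =
      (∫⁻ s in Ioo r t,
        ENNReal.ofReal ((t - s) ^ a₁ * s ^ b₁ * ((s - r) ^ a₂ * r ^ b₂))) *
        ENNReal.ofReal (f r) := by
    intro r hr
    have hGs : ∀ s, G (s, r) = (Ioi r).indicator
        (fun s => ENNReal.ofReal ((t - s) ^ a₁ * s ^ b₁) *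
          ENNReal.ofReal ((s - r) ^ a₂ * r ^ b₂ * f r)) s := by
      intro s
      simp only [hG_def, indicator_apply, mem_setOf_eq, mem_Ioi]
    simp only [hGs]
    rw [lintegral_indicator measurableSet_Ioi, Measure.restrict_restrict measurableSet_Ioi]
    have hset : Ioi r ∩ Ioo (0:ℝ) t = Ioo r t := by
      ext s
      simp only [mem_inter_iff, mem_Ioi, mem_Ioo]
      constructor
      · rintro ⟨h1, h2, h3⟩; exact ⟨h1, h3⟩
      · rintro ⟨h1, h2⟩; exact ⟨h1, lt_trans hr.1 h1, h2⟩
    rw [hset]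
    rw [setLIntegral_congr_fun measurableSet_Ioo (
      (fun s hs => ?_)), lintegral_mul_const' _ _ ENNReal.ofReal_ne_top]
    have e1 : (0:ℝ) ≤ (s - r) ^ a₂ * r ^ b₂ :=
      mul_nonneg (Real.rpow_nonneg (by linarith [hs.1]) _) (Real.rpow_nonneg hr.1.le _)
    have e2 : (0:ℝ) ≤ (t - s) ^ a₁ * s ^ b₁ :=
      mul_nonneg (Real.rpow_nonneg (by linarith [hs.2]) _)
        (Real.rpow_nonneg (by linarith [hr.1, hs.1]) _)
    rw [← ENNReal.ofReal_mul e2, ← ENNReal.ofReal_mul (mul_nonneg e2 e1)]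
    congr 1
    ring
  rw [step1, step2]
  calc (∫⁻ r in Ioo (0 : ℝ) t, ∫⁻ s in Ioo (0 : ℝ) t, G (s, r))
      = ∫⁻ r in Ioo (0 : ℝ) t, (∫⁻ s in Ioo r t,
          ENNReal.ofReal ((t - s) ^ a₁ * s ^ b₁ * ((s - r) ^ a₂ * r ^ b₂))) *
          ENNReal.ofReal (f r) :=
        setLIntegral_congr_fun measurableSet_Ioo step3
    _ ≤ ∫⁻ r in Ioo (0 : ℝ) t, ENNReal.ofReal C *
          ((ENNReal.ofReal ((t - r) ^ a₁ * r ^ b₁) +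
            ENNReal.ofReal ((t - r) ^ a₂ * r ^ b₂)) * ENNReal.ofReal (f r)) := by
        apply setLIntegral_mono' measurableSet_Ioo
        intro r hr
        rw [← mul_assoc]
        exact mul_le_mul_left (hker t htT r hr.1 hr.2) _
    _ = ENNReal.ofReal C * ∫⁻ r in Ioo (0 : ℝ) t,
          (ENNReal.ofReal ((t - r) ^ a₁ * r ^ b₁) * ENNReal.ofReal (f r) +
            ENNReal.ofReal ((t - r) ^ a₂ * r ^ b₂) * ENNReal.ofReal (f r)) := by
        rw [lintegral_const_mul' _ _ ENNReal.ofReal_ne_top]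
        congr 1
        apply lintegral_congr
        intro r
        ring
    _ = ENNReal.ofReal C *
          ((∫⁻ s in Ioo (0 : ℝ) t, ENNReal.ofReal ((t - s) ^ a₁ * s ^ b₁ * f s)) +
            ∫⁻ s in Ioo (0 : ℝ) t, ENNReal.ofReal ((t - s) ^ a₂ * s ^ b₂ * f s)) := by
        congr 1
        rw [lintegral_add_left (by fun_prop)]
        congr 1
        · apply setLIntegral_congr_fun measurableSet_Ioo
          intro r hr
          beta_reduce
          rw [← ENNReal.ofReal_mul (mul_nonneg (Real.rpow_nonneg (by linarith [hr.2]) _)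
            (Real.rpow_nonneg hr.1.le _)), mul_assoc]
        · apply setLIntegral_congr_fun measurableSet_Ioo
          intro r hr
          beta_reduce
          rw [← ENNReal.ofReal_mul (mul_nonneg (Real.rpow_nonneg (by linarith [hr.2]) _)
            (Real.rpow_nonneg hr.1.le _)), mul_assoc]
end

section
/- Let α ∈ (1, 2], β₀ ∈ (−1, 0), Λ ∈ (0, α − 1), T > 0, β ∈ [0, (β₀ + α) ∧ (α − Λ)) and γ ∈ [0, α ∧ (α − 1 + β − β₀)). Then there exist an exponent p ∈ (1, ∞) and a constant C_T > 0 such that for every t ∈ (0, T] and every Borel measurable f : [0, t] → [0, ∞), ∫₀ᵗ G_β(t, s) s^{−γ/α} f(s) ds ≤ C_T ( ∫₀ᵗ f(s)^p ds )^{1/p}. -/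
open MeasureTheory Set

set_option maxHeartbeats 1000000

lemma lint_rpow_Ioo (B t : ℝ) (hB1 : B < 1) (ht : 0 < t) :
    ∫⁻ s in Ioo (0:ℝ) t, ENNReal.ofReal (s ^ (-B)) =
      ENNReal.ofReal (t ^ (1 - B) / (1 - B)) := by
  rw [setLIntegral_congr Ioo_ae_eq_Ioc]
  rw [← ofReal_integral_eq_lintegral_ofReal]
  · rw [← intervalIntegral.integral_of_le ht.le,
      integral_rpow (Or.inl (by linarith : (-1:ℝ) < -B))]
    rw [Real.zero_rpow (by linarith : -B + 1 ≠ 0)]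
    norm_num
    ring_nf
  · exact (intervalIntegral.intervalIntegrable_rpow' (by linarith)).1
  · exact ae_restrict_of_forall_mem measurableSet_Ioc fun s hs =>
      Real.rpow_nonneg hs.1.le _

lemma lint_rpow_sub_Ioo (A t : ℝ) (hA1 : A < 1) (ht : 0 < t) :
    ∫⁻ s in Ioo (0:ℝ) t, ENNReal.ofReal ((t - s) ^ (-A)) =
      ENNReal.ofReal (t ^ (1 - A) / (1 - A)) := by
  rw [setLIntegral_congr Ioo_ae_eq_Ioc]
  rw [← ofReal_integral_eq_lintegral_ofReal]
  · rw [← intervalIntegral.integral_of_le ht.le]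
    have := intervalIntegral.integral_comp_sub_left (a := 0) (b := t)
      (fun u : ℝ => u ^ (-A)) t
    simp only [sub_zero, sub_self] at this
    rw [this, integral_rpow (Or.inl (by linarith : (-1:ℝ) < -A))]
    rw [Real.zero_rpow (by linarith : -A + 1 ≠ 0)]
    norm_num
    ring_nf
  · have h := (intervalIntegral.intervalIntegrable_rpow'
      (a := 0) (b := t) (by linarith : (-1:ℝ) < -A)).comp_sub_left t
    simp only [sub_zero, sub_self] at h
    exact h.2
  · exact ae_restrict_of_forall_mem measurableSet_Ioc fun s hs =>
      Real.rpow_nonneg (by linarith [hs.2]) _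

lemma beta_bound (A B t : ℝ) (hA0 : 0 ≤ A) (hA1 : A < 1) (hB0 : 0 ≤ B) (hB1 : B < 1)
    (ht : 0 < t) :
    ∫⁻ s in Ioo (0:ℝ) t, ENNReal.ofReal ((t - s) ^ (-A) * s ^ (-B)) ≤
      ENNReal.ofReal ((2 ^ A / (1 - B) + 2 ^ B / (1 - A)) * t ^ (1 - A - B)) := by
  have ht2 : 0 < t / 2 := by linarith
  have key : ∀ s ∈ Ioo (0:ℝ) t,
      ENNReal.ofReal ((t - s) ^ (-A) * s ^ (-B)) ≤
        ENNReal.ofReal ((t/2) ^ (-A) * s ^ (-B)) +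
          ENNReal.ofReal ((t/2) ^ (-B) * (t - s) ^ (-A)) := by
    intro s hs
    obtain ⟨hs0, hst⟩ := hs
    rcases le_or_gt s (t/2) with h | h
    · refine le_trans ?_ (le_add_of_nonneg_right zero_le)
      apply ENNReal.ofReal_le_ofReal
      apply mul_le_mul_of_nonneg_right _ (Real.rpow_nonneg hs0.le _)
      exact Real.rpow_le_rpow_of_nonpos ht2 (by linarith) (by linarith)
    · refine le_trans ?_ (le_add_of_nonneg_left zero_le)
      apply ENNReal.ofReal_le_ofReal
      rw [mul_comm]
      apply mul_le_mul_of_nonneg_right _ (Real.rpow_nonneg (by linarith) _)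
      exact Real.rpow_le_rpow_of_nonpos ht2 h.le (by linarith)
  calc ∫⁻ s in Ioo (0:ℝ) t, ENNReal.ofReal ((t - s) ^ (-A) * s ^ (-B))
      ≤ ∫⁻ s in Ioo (0:ℝ) t, (ENNReal.ofReal ((t/2) ^ (-A) * s ^ (-B)) +
          ENNReal.ofReal ((t/2) ^ (-B) * (t - s) ^ (-A))) :=
        setLIntegral_mono_ae (by fun_prop) (ae_of_all _ key)
    _ = ENNReal.ofReal ((t/2) ^ (-A)) * ENNReal.ofReal (t ^ (1-B) / (1-B)) +
        ENNReal.ofReal ((t/2) ^ (-B)) * ENNReal.ofReal (t ^ (1-A) / (1-A)) := by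
        rw [lintegral_add_left (by fun_prop)]
        congr 1
        · simp_rw [ENNReal.ofReal_mul (Real.rpow_nonneg ht2.le _)]
          rw [lintegral_const_mul' _ _ ENNReal.ofReal_ne_top, lint_rpow_Ioo B t hB1 ht]
        · simp_rw [ENNReal.ofReal_mul (Real.rpow_nonneg ht2.le _)]
          rw [lintegral_const_mul' _ _ ENNReal.ofReal_ne_top, lint_rpow_sub_Ioo A t hA1 ht]
    _ ≤ _ := by
        rw [← ENNReal.ofReal_mul (Real.rpow_nonneg ht2.le _),
          ← ENNReal.ofReal_mul (Real.rpow_nonneg ht2.le _), ← ENNReal.ofReal_add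
          (mul_nonneg (Real.rpow_nonneg ht2.le _) (div_nonneg (Real.rpow_nonneg ht.le _) (by linarith)))
          (mul_nonneg (Real.rpow_nonneg ht2.le _) (div_nonneg (Real.rpow_nonneg ht.le _) (by linarith)))]
        apply ENNReal.ofReal_le_ofReal
        have h2 : ∀ E : ℝ, (t/2:ℝ) ^ (-E) = 2 ^ E * t ^ (-E) := by
          intro E
          rw [Real.div_rpow ht.le (by norm_num), Real.rpow_neg (by norm_num : (0:ℝ) ≤ 2)]
          field_simp
        have e1 : (t/2) ^ (-A) * (t ^ (1-B) / (1-B)) = 2 ^ A / (1 - B) * t ^ (1 - A - B) := by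
          rw [h2, show (1 - A - B) = (-A) + (1-B) by ring, Real.rpow_add ht]; ring
        have e2 : (t/2) ^ (-B) * (t ^ (1-A) / (1-A)) = 2 ^ B / (1 - A) * t ^ (1 - A - B) := by
          rw [h2, show (1 - A - B) = (-B) + (1-A) by ring, Real.rpow_add ht]; ring
        rw [e1, e2, add_mul]


/-- The kinetic Volterra kernel
`G_β(t,s) = t^{(β-β₀)/α} (t-s)^{-1/α} + t^{(β+Λ)/α} (t-s)^{-(Λ+β₀+1)/α}`. -/
noncomputable def Gker (α β₀ Λ β t s : ℝ) : ℝ :=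
  t ^ ((β - β₀) / α) * (t - s) ^ (-(1 / α)) +
    t ^ ((β + Λ) / α) * (t - s) ^ (-((Λ + β₀ + 1) / α))

/-- integral of the kinetic kernel against `s^{-γ/α} f(s)` is controlled
by an `L^p` norm of `f` for a large enough exponent `p`. -/
theorem Gker_Lp_bound
    (α β₀ Λ T β γ : ℝ)
    (hα : α ∈ Ioc (1 : ℝ) 2) (hβ₀ : β₀ ∈ Ioo (-1 : ℝ) 0)
    (hΛ : Λ ∈ Ioo (0 : ℝ) (α - 1)) (hT : 0 < T)
    (hβ : β ∈ Ico (0 : ℝ) (min (β₀ + α) (α - Λ)))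
    (hγ : γ ∈ Ico (0 : ℝ) (min α (α - 1 + β - β₀))) :
    ∃ p : ℝ, 1 < p ∧ ∃ C : ℝ, 0 < C ∧ ∀ t ∈ Ioc (0 : ℝ) T, ∀ f : ℝ → ℝ,
      Measurable f → (∀ s, 0 ≤ f s) →
      (∫⁻ s in Ioo (0 : ℝ) t,
          ENNReal.ofReal (Gker α β₀ Λ β t s * s ^ (-(γ / α)) * f s)) ≤
        ENNReal.ofReal C *
          (∫⁻ s in Ioo (0 : ℝ) t, ENNReal.ofReal (f s ^ p)) ^ (1 / p) := by
  obtain ⟨hα1, hα2⟩ := hα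
  obtain ⟨hβ₀1, hβ₀2⟩ := hβ₀
  obtain ⟨hΛ1, hΛ2⟩ := hΛ
  obtain ⟨hβ1, hβ2⟩ := hβ
  obtain ⟨hγ1, hγ2⟩ := hγ
  rw [lt_min_iff] at hβ2 hγ2
  have hα0 : (0:ℝ) < α := by linarith
  have hΛβ₀ : 0 < Λ + β₀ + 1 := by linarith
  set δ : ℝ := α - 1 + β - β₀ - γ with hδdef
  have hδ : 0 < δ := by simp only [hδdef]; linarith [hγ2.2]
  set ε : ℝ := (1/2) * min (min (α-1) (α/(Λ+β₀+1) - 1)) (min ((α-γ)/α) (δ/α)) with hεdef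
  have hm1 : (0:ℝ) < α - 1 := by linarith
  have hm2 : (0:ℝ) < α/(Λ+β₀+1) - 1 := by
    have : Λ + β₀ + 1 < α := by linarith
    have := (one_lt_div hΛβ₀).2 this
    linarith
  have hm3 : (0:ℝ) < (α-γ)/α := div_pos (by linarith [hγ2.1]) hα0
  have hm4 : (0:ℝ) < δ/α := div_pos hδ hα0
  have hε : 0 < ε := by
    simp only [hεdef]
    positivity
  have hεle : ∀ x ∈ ({α-1, α/(Λ+β₀+1) - 1, (α-γ)/α, δ/α} : Set ℝ), ε < x := by
    intro x hx
    have hmin : min (min (α-1) (α/(Λ+β₀+1) - 1)) (min ((α-γ)/α) (δ/α)) ≤ x := by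
      simp only [mem_insert_iff, mem_singleton_iff] at hx
      rcases hx with rfl | rfl | rfl | rfl
      · exact le_trans (min_le_left _ _) (min_le_left _ _)
      · exact le_trans (min_le_left _ _) (min_le_right _ _)
      · exact le_trans (min_le_right _ _) (min_le_left _ _)
      · exact le_trans (min_le_right _ _) (min_le_right _ _)
    have : 0 < min (min (α-1) (α/(Λ+β₀+1) - 1)) (min ((α-γ)/α) (δ/α)) := by positivity
    rw [hεdef]; linarith
  set q : ℝ := 1 + ε with hqdef
  have hq1 : 1 < q := by simp only [hqdef]; linarith
  have hq0 : 0 < q := by linarith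
  set p : ℝ := q / (q - 1) with hpdef
  have hqp : q.HolderConjugate p := Real.HolderConjugate.conjExponent hq1
  have hp1 : 1 < p := by rw [hpdef, one_lt_div (by linarith)]; linarith
  have hp0 : 0 < p := by linarith
  -- exponent facts
  have hqα : q < α := by
    have := hεle (α-1) (by simp)
    simp only [hqdef]; linarith
  have hq2 : q * (Λ+β₀+1) < α := by
    have h := hεle (α/(Λ+β₀+1) - 1) (by simp)
    have : q < α/(Λ+β₀+1) := by simp only [hqdef]; linarith
    calc q * (Λ+β₀+1) < α/(Λ+β₀+1) * (Λ+β₀+1) := by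
          exact mul_lt_mul_of_pos_right this hΛβ₀
      _ = α := by field_simp
  have hq3 : q * γ < α := by
    have h := hεle ((α-γ)/α) (by simp)
    have h' : ε * α < α - γ := by
      rw [lt_div_iff₀ hα0] at h
      linarith
    have e1 : q*γ = γ + ε*γ := by rw [hqdef]; ring
    have e2 : ε*γ ≤ ε*α := mul_le_mul_of_nonneg_left (by linarith [hγ2.1]) hε.le
    linarith
  have hq4 : q * (α - δ) ≤ α := by
    have h := hεle (δ/α) (by simp)
    have h' : ε * α < δ := by
      rw [lt_div_iff₀ hα0] at h
      linarith
    have e1 : q*(α-δ) = α - δ + ε*α - ε*δ := by rw [hqdef]; ring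
    have e2 : 0 ≤ ε*δ := mul_nonneg hε.le hδ.le
    linarith
  -- basic exponents
  have hb0 : 0 ≤ γ/α := div_nonneg hγ1 hα0.le
  have hB1 : q * (γ/α) < 1 := by
    rw [← mul_div_assoc, div_lt_one hα0]; exact hq3
  have hB0 : 0 ≤ q * (γ/α) := mul_nonneg hq0.le hb0
  refine ⟨p, hp1, ?_⟩
  have key : ∀ a c : ℝ, 0 < a → q*a < 1 → 0 ≤ c → 0 ≤ c + 1/q - a - γ/α →
      ∀ t ∈ Ioc (0:ℝ) T, ∀ f : ℝ → ℝ, Measurable f → (∀ s, 0 ≤ f s) →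
      (∫⁻ s in Ioo (0:ℝ) t,
          ENNReal.ofReal (t^c * ((t-s)^(-a) * s^(-(γ/α)) * f s))) ≤
        ENNReal.ofReal ((2^(q*a)/(1-q*(γ/α)) + 2^(q*(γ/α))/(1-q*a))^(1/q)
            * T^(c+1/q-a-γ/α))
          * (∫⁻ s in Ioo (0:ℝ) t, ENNReal.ofReal (f s ^ p)) ^ (1/p) := by
    intro a c ha0 haq hc0 he t ht f hf hf0
    obtain ⟨ht0, htT⟩ := ht
    have hA0 : 0 ≤ q * a := mul_nonneg hq0.le ha0.le
    set g : ℝ → ℝ := fun s => (t-s)^(-a) * s^(-(γ/α)) with hgdef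
    have hgm : Measurable fun s => ENNReal.ofReal (g s) := by
      simp only [hgdef]; fun_prop
    have step1 : (∫⁻ s in Ioo (0:ℝ) t,
        ENNReal.ofReal (t^c * ((t-s)^(-a) * s^(-(γ/α)) * f s))) =
        ENNReal.ofReal (t^c) *
          ∫⁻ s in Ioo (0:ℝ) t, ENNReal.ofReal (g s) * ENNReal.ofReal (f s) := by
      rw [← lintegral_const_mul' _ _ ENNReal.ofReal_ne_top]
      refine setLIntegral_congr_fun measurableSet_Ioo ?_
      intro s hs
      beta_reduce
      have hg0 : 0 ≤ g s := mul_nonneg (Real.rpow_nonneg (by linarith [hs.2]) _)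
        (Real.rpow_nonneg hs.1.le _)
      rw [← ENNReal.ofReal_mul hg0, ← ENNReal.ofReal_mul (Real.rpow_nonneg ht0.le _)]
    rw [step1]
    have holder := ENNReal.lintegral_mul_le_Lp_mul_Lq (volume.restrict (Ioo (0:ℝ) t)) hqp
      hgm.aemeasurable (hf.ennreal_ofReal).aemeasurable
    simp only [Pi.mul_apply] at holder
    have stepq : (∫⁻ s in Ioo (0:ℝ) t, ENNReal.ofReal (g s) ^ q) ≤
        ENNReal.ofReal ((2^(q*a)/(1-q*(γ/α)) + 2^(q*(γ/α))/(1-q*a)) * t^(1-q*a-q*(γ/α))) := by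
      have eqq : ∀ s ∈ Ioo (0:ℝ) t, ENNReal.ofReal (g s) ^ q =
          ENNReal.ofReal ((t-s) ^ (-(q*a)) * s ^ (-(q*(γ/α)))) := by
        intro s hs
        have hts : (0:ℝ) ≤ t - s := by linarith [hs.2]
        have hg0 : 0 ≤ g s := mul_nonneg (Real.rpow_nonneg hts _)
          (Real.rpow_nonneg hs.1.le _)
        rw [ENNReal.ofReal_rpow_of_nonneg hg0 hq0.le]
        congr 1
        simp only [hgdef]
        rw [Real.mul_rpow (Real.rpow_nonneg hts _) (Real.rpow_nonneg hs.1.le _),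
          ← Real.rpow_mul hts, ← Real.rpow_mul hs.1.le]
        congr 1 <;> ring
      rw [setLIntegral_congr_fun measurableSet_Ioo eqq]
      exact beta_bound _ _ t hA0 haq hB0 hB1 ht0
    have steppf : (∫⁻ s in Ioo (0:ℝ) t, ENNReal.ofReal (f s) ^ p) =
        ∫⁻ s in Ioo (0:ℝ) t, ENNReal.ofReal (f s ^ p) := by
      refine lintegral_congr fun s => ?_
      rw [ENNReal.ofReal_rpow_of_nonneg (hf0 s) hp0.le]
    rw [steppf] at holder
    calc ENNReal.ofReal (t^c) * ∫⁻ s in Ioo (0:ℝ) t, ENNReal.ofReal (g s) * ENNReal.ofReal (f s)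
        ≤ ENNReal.ofReal (t^c) * ((∫⁻ s in Ioo (0:ℝ) t, ENNReal.ofReal (g s) ^ q) ^ (1/q) *
            (∫⁻ s in Ioo (0:ℝ) t, ENNReal.ofReal (f s ^ p)) ^ (1/p)) :=
          mul_le_mul_right holder _
      _ ≤ ENNReal.ofReal (t^c) *
            ((ENNReal.ofReal ((2^(q*a)/(1-q*(γ/α)) + 2^(q*(γ/α))/(1-q*a)) *
              t^(1-q*a-q*(γ/α)))) ^ (1/q) *
            (∫⁻ s in Ioo (0:ℝ) t, ENNReal.ofReal (f s ^ p)) ^ (1/p)) := by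
          gcongr
      _ ≤ _ := by
          rw [← mul_assoc]
          gcongr ?_ * _
          set K : ℝ := 2^(q*a)/(1-q*(γ/α)) + 2^(q*(γ/α))/(1-q*a) with hKdef
          have hK0 : 0 ≤ K := by
            have h1 : (0:ℝ) < 1 - q*(γ/α) := by linarith
            have h2 : (0:ℝ) < 1 - q*a := by linarith
            positivity
          rw [ENNReal.ofReal_rpow_of_nonneg
            (mul_nonneg hK0 (Real.rpow_nonneg ht0.le _)) (by positivity : (0:ℝ) ≤ 1/q),
            ← ENNReal.ofReal_mul (Real.rpow_nonneg ht0.le _)]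
          apply ENNReal.ofReal_le_ofReal
          rw [Real.mul_rpow hK0 (Real.rpow_nonneg ht0.le _), ← Real.rpow_mul ht0.le,
            ← mul_assoc, mul_comm (t^c), mul_assoc]
          apply mul_le_mul_of_nonneg_left _ (Real.rpow_nonneg hK0 _)
          rw [← Real.rpow_add ht0]
          have hq0' : q ≠ 0 := ne_of_gt hq0
          have hexp : c + (1-q*a-q*(γ/α)) * (1/q) = c+1/q-a-γ/α := by
            field_simp
            ring
          rw [hexp]
          exact Real.rpow_le_rpow ht0.le htT he
  -- the two exponent pairs
  have hb1 : (0:ℝ) < 1 - q*(γ/α) := by linarith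
  have ha₁0 : (0:ℝ) < 1/α := by positivity
  have ha₁q : q * (1/α) < 1 := by rw [mul_one_div, div_lt_one hα0]; exact hqα
  have hc₁0 : (0:ℝ) ≤ (β-β₀)/α := div_nonneg (by linarith) hα0.le
  have ha₂0 : (0:ℝ) < (Λ+β₀+1)/α := div_pos hΛβ₀ hα0
  have ha₂q : q * ((Λ+β₀+1)/α) < 1 := by
    rw [← mul_div_assoc, div_lt_one hα0]; exact hq2
  have hc₂0 : (0:ℝ) ≤ (β+Λ)/α := div_nonneg (by linarith) hα0.le
  have hinvq : (α - δ)/α ≤ 1/q := by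
    rw [div_le_div_iff₀ hα0 hq0]
    linarith [hq4]
  have he₁ : 0 ≤ (β-β₀)/α + 1/q - 1/α - γ/α := by
    have heq : (β-β₀)/α + 1/q - 1/α - γ/α = 1/q - (α-δ)/α := by
      rw [hδdef]; field_simp; ring
    linarith
  have he₂ : 0 ≤ (β+Λ)/α + 1/q - (Λ+β₀+1)/α - γ/α := by
    have heq : (β+Λ)/α + 1/q - (Λ+β₀+1)/α - γ/α = 1/q - (α-δ)/α := by
      rw [hδdef]; field_simp; ring
    linarith
  set C₁ : ℝ := (2^(q*(1/α))/(1-q*(γ/α)) + 2^(q*(γ/α))/(1-q*(1/α)))^(1/q)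
    * T^((β-β₀)/α+1/q-1/α-γ/α) with hC₁def
  set C₂ : ℝ := (2^(q*((Λ+β₀+1)/α))/(1-q*(γ/α)) + 2^(q*(γ/α))/(1-q*((Λ+β₀+1)/α)))^(1/q)
    * T^((β+Λ)/α+1/q-(Λ+β₀+1)/α-γ/α) with hC₂def
  have hb1' : (0:ℝ) < 1 - q*(1/α) := by linarith
  have hb2' : (0:ℝ) < 1 - q*((Λ+β₀+1)/α) := by linarith
  have hC₁ : 0 < C₁ := by
    rw [hC₁def]
    have h2 : (0:ℝ) < 2^(q*(1/α))/(1-q*(γ/α)) + 2^(q*(γ/α))/(1-q*(1/α)) := by positivity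
    positivity
  have hC₂ : 0 < C₂ := by
    rw [hC₂def]
    have h2 : (0:ℝ) < 2^(q*((Λ+β₀+1)/α))/(1-q*(γ/α)) + 2^(q*(γ/α))/(1-q*((Λ+β₀+1)/α)) := by
      positivity
    positivity
  refine ⟨C₁ + C₂, by linarith, ?_⟩
  intro t ht f hf hf0
  have ht0 := ht.1
  have hsplit : ∀ s ∈ Ioo (0:ℝ) t,
      ENNReal.ofReal (Gker α β₀ Λ β t s * s ^ (-(γ / α)) * f s) =
        ENNReal.ofReal (t^((β-β₀)/α) * ((t-s)^(-(1/α)) * s^(-(γ/α)) * f s)) +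
        ENNReal.ofReal (t^((β+Λ)/α) * ((t-s)^(-((Λ+β₀+1)/α)) * s^(-(γ/α)) * f s)) := by
    intro s hs
    have hts : (0:ℝ) ≤ t - s := by linarith [hs.2]
    have h1 : 0 ≤ t^((β-β₀)/α) * ((t-s)^(-(1/α)) * s^(-(γ/α)) * f s) := by
      have := hf0 s
      have := Real.rpow_nonneg ht0.le ((β-β₀)/α)
      have := Real.rpow_nonneg hts (-(1/α))
      have := Real.rpow_nonneg hs.1.le (-(γ/α))
      positivity
    have h2 : 0 ≤ t^((β+Λ)/α) * ((t-s)^(-((Λ+β₀+1)/α)) * s^(-(γ/α)) * f s) := by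
      have := hf0 s
      have := Real.rpow_nonneg ht0.le ((β+Λ)/α)
      have := Real.rpow_nonneg hts (-((Λ+β₀+1)/α))
      have := Real.rpow_nonneg hs.1.le (-(γ/α))
      positivity
    rw [← ENNReal.ofReal_add h1 h2]
    congr 1
    simp only [Gker]
    ring
  rw [setLIntegral_congr_fun measurableSet_Ioo hsplit,
    lintegral_add_left (by fun_prop)]
  calc (∫⁻ s in Ioo (0:ℝ) t,
        ENNReal.ofReal (t^((β-β₀)/α) * ((t-s)^(-(1/α)) * s^(-(γ/α)) * f s))) +
      (∫⁻ s in Ioo (0:ℝ) t,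
        ENNReal.ofReal (t^((β+Λ)/α) * ((t-s)^(-((Λ+β₀+1)/α)) * s^(-(γ/α)) * f s)))
      ≤ ENNReal.ofReal C₁ * (∫⁻ s in Ioo (0:ℝ) t, ENNReal.ofReal (f s ^ p)) ^ (1/p) +
        ENNReal.ofReal C₂ * (∫⁻ s in Ioo (0:ℝ) t, ENNReal.ofReal (f s ^ p)) ^ (1/p) :=
        add_le_add
          (key (1/α) ((β-β₀)/α) ha₁0 ha₁q hc₁0 he₁ t ht f hf hf0)
          (key ((Λ+β₀+1)/α) ((β+Λ)/α) ha₂0 ha₂q hc₂0 he₂ t ht f hf hf0)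
    _ = _ := by
        rw [← add_mul, ← ENNReal.ofReal_add hC₁.le hC₂.le]
end

section
/- Let α ∈ (1, 2], β₀ ∈ (−1, 0), Λ ∈ (0, α − 1), T > 0, β ∈ [0, (β₀ + α) ∧ (α − Λ)) and γ ∈ [0, α ∧ (α − 1 + β − β₀)). Then there exists a constant C_T > 0 such that for every t ∈ (0, T] and every Borel measurable f : [0, T] → [0, ∞), ∫₀ᵗ G_β(t, s) s^{−γ/α} ( ∫₀ˢ G_β(s, r) f(r) dr ) ds ≤ C_T ∫₀ᵗ G_β(t, s) f(s) ds. -/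
open MeasureTheory Set

lemma lint_Ioo_sub_left {u v : ℝ} (w : ℝ) (huv : u < v) (hw : -1 < w) :
    ∫⁻ s in Ioo u v, ENNReal.ofReal ((s - u) ^ w) ≤
      ENNReal.ofReal ((v - u) ^ (w + 1) / (w + 1)) := by
  have hint : IntervalIntegrable (fun s => (s - u) ^ w) volume u v := by
    simpa using (intervalIntegral.intervalIntegrable_rpow' (a := 0) (b := v - u) hw).comp_sub_right u
  rw [Measure.restrict_congr_set Ioo_ae_eq_Ioc,
    ← ofReal_integral_eq_lintegral_ofReal
      (by rw [← uIoc_of_le huv.le]; exact intervalIntegrable_iff.mp hint)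
      (Filter.eventually_of_mem (self_mem_ae_restrict measurableSet_Ioc)
        (fun s hs => Real.rpow_nonneg (by simp [sub_nonneg, hs.1.le]) w))]
  apply ENNReal.ofReal_le_ofReal
  rw [← intervalIntegral.integral_of_le huv.le]
  rw [intervalIntegral.integral_comp_sub_right (fun x : ℝ => x ^ w) u]
  rw [integral_rpow (Or.inl hw)]
  rw [sub_self, Real.zero_rpow (by linarith)]
  ring_nf
  simp [le_refl]

lemma lint_Ioo_sub_right {u v : ℝ} (w : ℝ) (huv : u < v) (hw : -1 < w) :
    ∫⁻ s in Ioo u v, ENNReal.ofReal ((v - s) ^ w) ≤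
      ENNReal.ofReal ((v - u) ^ (w + 1) / (w + 1)) := by
  have hint : IntervalIntegrable (fun s => (v - s) ^ w) volume u v := by
    simpa using (intervalIntegral.intervalIntegrable_rpow' (a := v - u) (b := 0) hw).comp_sub_left v
  rw [Measure.restrict_congr_set Ioo_ae_eq_Ioc,
    ← ofReal_integral_eq_lintegral_ofReal
      (by rw [← uIoc_of_le huv.le]; exact intervalIntegrable_iff.mp hint)
      (Filter.eventually_of_mem (self_mem_ae_restrict measurableSet_Ioc)
        (fun s hs => Real.rpow_nonneg (by simp [sub_nonneg, hs.2]) w))]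
  apply ENNReal.ofReal_le_ofReal
  rw [← intervalIntegral.integral_of_le huv.le]
  rw [intervalIntegral.integral_comp_sub_left (fun x : ℝ => x ^ w) v]
  rw [integral_rpow (Or.inl hw)]
  rw [sub_self, Real.zero_rpow (by linarith)]
  ring_nf
  simp [le_refl]

lemma term_bound {T q c κ : ℝ} (e : ℝ) (hT : 0 < T) (hq0 : 0 < q) (hq1 : q < 1)
    (hc0 : 0 ≤ c) (hek : e - q = κ) (hck : c < κ + 1) :
    ∃ D : ℝ, 0 < D ∧ ∀ r v : ℝ, 0 < r → r < v → v ≤ T →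
      ∫⁻ s in Ioo r v, ENNReal.ofReal (s ^ (e - c) * (s - r) ^ (-q)) ≤ ENNReal.ofReal D := by
  have h1q : (0:ℝ) < 1 - q := by linarith
  rcases le_or_gt c e with h | h
  · refine ⟨T ^ (e - c) * (T ^ (1 - q) / (1 - q)), by positivity, fun r v hr hrv hvT => ?_⟩
    calc ∫⁻ s in Ioo r v, ENNReal.ofReal (s ^ (e - c) * (s - r) ^ (-q))
        ≤ ∫⁻ s in Ioo r v, ENNReal.ofReal (T ^ (e - c)) * ENNReal.ofReal ((s - r) ^ (-q)) := by
          apply setLIntegral_mono' measurableSet_Ioo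
          intro s hs
          rw [← ENNReal.ofReal_mul (Real.rpow_nonneg hT.le _)]
          apply ENNReal.ofReal_le_ofReal
          apply mul_le_mul_of_nonneg_right _ (Real.rpow_nonneg (by linarith [hs.1, hs.2] : (0:ℝ) ≤ s - r) _)
          exact Real.rpow_le_rpow (by linarith [hs.1]) (hs.2.le.trans hvT) (by linarith)
      _ = ENNReal.ofReal (T ^ (e - c)) * ∫⁻ s in Ioo r v, ENNReal.ofReal ((s - r) ^ (-q)) :=
          lintegral_const_mul' _ _ ENNReal.ofReal_ne_top
      _ ≤ ENNReal.ofReal (T ^ (e - c)) * ENNReal.ofReal ((v - r) ^ (-q + 1) / (-q + 1)) :=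
          mul_le_mul_right (lint_Ioo_sub_left _ hrv (by linarith)) _
      _ ≤ _ := by
          rw [← ENNReal.ofReal_mul (Real.rpow_nonneg hT.le _)]
          apply ENNReal.ofReal_le_ofReal
          rw [show -q + 1 = 1 - q by ring]
          have h2 : (v - r) ^ (1 - q) ≤ T ^ (1 - q) :=
            Real.rpow_le_rpow (by linarith) (by linarith) h1q.le
          have h3 : (0:ℝ) ≤ T ^ (e - c) := Real.rpow_nonneg hT.le _
          exact mul_le_mul_of_nonneg_left ((div_le_div_iff_of_pos_right h1q).mpr h2) h3
  · have hκc : (0:ℝ) < κ - c + 1 := by linarith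
    refine ⟨T ^ (κ - c + 1) / (κ - c + 1), by positivity, fun r v hr hrv hvT => ?_⟩
    calc ∫⁻ s in Ioo r v, ENNReal.ofReal (s ^ (e - c) * (s - r) ^ (-q))
        ≤ ∫⁻ s in Ioo r v, ENNReal.ofReal ((s - r) ^ (κ - c)) := by
          apply setLIntegral_mono' measurableSet_Ioo
          intro s hs
          apply ENNReal.ofReal_le_ofReal
          have hsr : 0 < s - r := by linarith [hs.1]
          have h1 : s ^ (e - c) ≤ (s - r) ^ (e - c) :=
            Real.rpow_le_rpow_of_nonpos hsr (by linarith) (by linarith)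
          calc s ^ (e - c) * (s - r) ^ (-q) ≤ (s - r) ^ (e - c) * (s - r) ^ (-q) :=
                mul_le_mul_of_nonneg_right h1 (Real.rpow_nonneg hsr.le _)
            _ = (s - r) ^ (κ - c) := by
                rw [← Real.rpow_add hsr, show e - c + -q = κ - c from by linarith]
      _ ≤ ENNReal.ofReal ((v - r) ^ (κ - c + 1) / (κ - c + 1)) :=
          lint_Ioo_sub_left _ hrv (by linarith)
      _ ≤ _ := ENNReal.ofReal_le_ofReal
          ((div_le_div_iff_of_pos_right hκc).mpr (Real.rpow_le_rpow (by linarith) (by linarith) hκc.le))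

section
variable {u v : ℝ}

lemma two_term_key {T a b μ ν c κ : ℝ}
    (hT : 0 < T) (ha0 : 0 < a) (ha1 : a < 1) (hb0 : 0 < b) (hb1 : b < 1)
    (hμ0 : 0 ≤ μ) (hν0 : 0 ≤ ν) (hc0 : 0 ≤ c) (hc1 : c < 1)
    (hκa : μ - a = κ) (hκb : ν - b = κ) (hck : c < κ + 1) :
    ∃ C : ℝ, 0 < C ∧ ∀ t ∈ Ioc (0:ℝ) T, ∀ r ∈ Ioo (0:ℝ) t,
      ∫⁻ s in Ioo r t, ENNReal.ofReal
          ((t ^ μ * (t - s) ^ (-a) + t ^ ν * (t - s) ^ (-b)) * s ^ (-c) *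
            (s ^ μ * (s - r) ^ (-a) + s ^ ν * (s - r) ^ (-b)))
        ≤ ENNReal.ofReal (C * (t ^ μ * (t - r) ^ (-a) + t ^ ν * (t - r) ^ (-b))) := by
  obtain ⟨D₁, hD₁, hD₁b⟩ := term_bound μ hT ha0 ha1 hc0 hκa hck
  obtain ⟨D₂, hD₂, hD₂b⟩ := term_bound ν hT hb0 hb1 hc0 hκb hck
  have hκc : (0:ℝ) < κ + 1 - c := by linarith
  have h1a : (0:ℝ) < 1 - a := by linarith
  have h1b : (0:ℝ) < 1 - b := by linarith
  set K : ℝ := 1 / (1 - a) + 1 / (1 - b) with hK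
  have hKpos : 0 < K := by rw [hK]; positivity
  refine ⟨2 * (D₁ + D₂) + 4 * K * T ^ (κ + 1 - c), by positivity, ?_⟩
  rintro t ⟨ht0, htT⟩ r ⟨hr0, hrt⟩
  set m : ℝ := (r + t) / 2 with hm
  have hrm : r < m := by rw [hm]; linarith
  have hmt : m < t := by rw [hm]; linarith
  have hm0 : 0 < m := by rw [hm]; linarith
  have htr0 : (0:ℝ) ≤ t - r := by linarith
  have hGtr0 : 0 ≤ t ^ μ * (t - r) ^ (-a) + t ^ ν * (t - r) ^ (-b) :=
    add_nonneg (mul_nonneg (Real.rpow_nonneg ht0.le _) (Real.rpow_nonneg htr0 _))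
      (mul_nonneg (Real.rpow_nonneg ht0.le _) (Real.rpow_nonneg htr0 _))
  -- halving estimate
  have hhalf : ∀ x p : ℝ, (t - r) / 2 ≤ x → 0 < p → p ≤ 1 → x ^ (-p) ≤ 2 * (t - r) ^ (-p) := by
    intro x p hx hp0 hp1
    have htr2 : (0:ℝ) < (t - r) / 2 := by linarith
    calc x ^ (-p) ≤ ((t - r) / 2) ^ (-p) :=
          Real.rpow_le_rpow_of_nonpos htr2 hx (by linarith)
      _ = (t - r) ^ (-p) * 2 ^ p := by
          rw [Real.div_rpow htr0 (by norm_num : (0:ℝ) ≤ 2),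
            Real.rpow_neg (by norm_num : (0:ℝ) ≤ 2), div_inv_eq_mul]
      _ ≤ (t - r) ^ (-p) * 2 := by
          have h2p : (2:ℝ) ^ p ≤ 2 := by
            calc (2:ℝ) ^ p ≤ 2 ^ (1:ℝ) := Real.rpow_le_rpow_of_exponent_le one_le_two hp1
              _ = 2 := Real.rpow_one 2
          exact mul_le_mul_of_nonneg_left h2p (Real.rpow_nonneg htr0 _)
      _ = 2 * (t - r) ^ (-p) := mul_comm _ _
  have hG1 : ∀ s ∈ Ioo r m, t ^ μ * (t - s) ^ (-a) + t ^ ν * (t - s) ^ (-b) ≤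
      2 * (t ^ μ * (t - r) ^ (-a) + t ^ ν * (t - r) ^ (-b)) := by
    intro s hs
    have h1 := hhalf (t - s) a (by rw [hm] at hs; linarith [hs.2]) ha0 ha1.le
    have h2 := hhalf (t - s) b (by rw [hm] at hs; linarith [hs.2]) hb0 hb1.le
    calc t ^ μ * (t - s) ^ (-a) + t ^ ν * (t - s) ^ (-b)
        ≤ t ^ μ * (2 * (t - r) ^ (-a)) + t ^ ν * (2 * (t - r) ^ (-b)) :=
          add_le_add (mul_le_mul_of_nonneg_left h1 (Real.rpow_nonneg ht0.le _))
            (mul_le_mul_of_nonneg_left h2 (Real.rpow_nonneg ht0.le _))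
      _ = 2 * (t ^ μ * (t - r) ^ (-a) + t ^ ν * (t - r) ^ (-b)) := by ring
  have hG2 : ∀ s ∈ Ioo m t, s ^ μ * (s - r) ^ (-a) + s ^ ν * (s - r) ^ (-b) ≤
      2 * (t ^ μ * (t - r) ^ (-a) + t ^ ν * (t - r) ^ (-b)) := by
    intro s hs
    have hs0 : (0:ℝ) < s := lt_trans hm0 hs.1
    have hsr0 : (0:ℝ) ≤ s - r := by rw [hm] at hs; linarith [hs.1]
    have h1 := hhalf (s - r) a (by rw [hm] at hs; linarith [hs.1]) ha0 ha1.le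
    have h2 := hhalf (s - r) b (by rw [hm] at hs; linarith [hs.1]) hb0 hb1.le
    have hsμ : s ^ μ ≤ t ^ μ := Real.rpow_le_rpow hs0.le hs.2.le hμ0
    have hsν : s ^ ν ≤ t ^ ν := Real.rpow_le_rpow hs0.le hs.2.le hν0
    calc s ^ μ * (s - r) ^ (-a) + s ^ ν * (s - r) ^ (-b)
        ≤ t ^ μ * (2 * (t - r) ^ (-a)) + t ^ ν * (2 * (t - r) ^ (-b)) := by
          refine add_le_add (mul_le_mul hsμ h1 (Real.rpow_nonneg hsr0 _) (Real.rpow_nonneg ht0.le _))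
            (mul_le_mul hsν h2 (Real.rpow_nonneg hsr0 _) (Real.rpow_nonneg ht0.le _))
      _ = 2 * (t ^ μ * (t - r) ^ (-a) + t ^ ν * (t - r) ^ (-b)) := by ring
  have hsplit : Ioo r t = Ioo r m ∪ Ico m t := (Ioo_union_Ico_eq_Ioo hrm hmt.le).symm
  have hdisj : Disjoint (Ioo r m) (Ico m t) :=
    Set.disjoint_left.mpr fun x hx hx' => absurd hx'.1 (not_le.mpr hx.2)
  rw [hsplit, lintegral_union measurableSet_Ico hdisj]
  have hpart1 : ∫⁻ s in Ioo r m, ENNReal.ofReal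
        ((t ^ μ * (t - s) ^ (-a) + t ^ ν * (t - s) ^ (-b)) * s ^ (-c) *
          (s ^ μ * (s - r) ^ (-a) + s ^ ν * (s - r) ^ (-b)))
      ≤ ENNReal.ofReal (2 * (D₁ + D₂) *
          (t ^ μ * (t - r) ^ (-a) + t ^ ν * (t - r) ^ (-b))) := by
    have hmono : ∀ s ∈ Ioo r m, ENNReal.ofReal
        ((t ^ μ * (t - s) ^ (-a) + t ^ ν * (t - s) ^ (-b)) * s ^ (-c) *
          (s ^ μ * (s - r) ^ (-a) + s ^ ν * (s - r) ^ (-b)))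
        ≤ ENNReal.ofReal (2 * (t ^ μ * (t - r) ^ (-a) + t ^ ν * (t - r) ^ (-b))) *
          ENNReal.ofReal (s ^ (μ - c) * (s - r) ^ (-a) + s ^ (ν - c) * (s - r) ^ (-b)) := by
      intro s hs
      have hs0 : (0:ℝ) < s := lt_trans hr0 hs.1
      have hsr0 : (0:ℝ) ≤ s - r := by linarith [hs.1]
      have e1 : s ^ (-c) * (s ^ μ * (s - r) ^ (-a) + s ^ ν * (s - r) ^ (-b)) =
          s ^ (μ - c) * (s - r) ^ (-a) + s ^ (ν - c) * (s - r) ^ (-b) := by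
        rw [mul_add, ← mul_assoc, ← mul_assoc, ← Real.rpow_add hs0, ← Real.rpow_add hs0,
          show -c + μ = μ - c by ring, show -c + ν = ν - c by ring]
      rw [← ENNReal.ofReal_mul (by linarith [hGtr0] : (0:ℝ) ≤ 2 * (t ^ μ * (t - r) ^ (-a) + t ^ ν * (t - r) ^ (-b)))]
      apply ENNReal.ofReal_le_ofReal
      rw [← e1]
      have hX0 : 0 ≤ s ^ (-c) * (s ^ μ * (s - r) ^ (-a) + s ^ ν * (s - r) ^ (-b)) :=
        mul_nonneg (Real.rpow_nonneg hs0.le _)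
          (add_nonneg (mul_nonneg (Real.rpow_nonneg hs0.le _) (Real.rpow_nonneg hsr0 _))
            (mul_nonneg (Real.rpow_nonneg hs0.le _) (Real.rpow_nonneg hsr0 _)))
      calc (t ^ μ * (t - s) ^ (-a) + t ^ ν * (t - s) ^ (-b)) * s ^ (-c) *
            (s ^ μ * (s - r) ^ (-a) + s ^ ν * (s - r) ^ (-b))
          = (t ^ μ * (t - s) ^ (-a) + t ^ ν * (t - s) ^ (-b)) *
            (s ^ (-c) * (s ^ μ * (s - r) ^ (-a) + s ^ ν * (s - r) ^ (-b))) := by ring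
        _ ≤ 2 * (t ^ μ * (t - r) ^ (-a) + t ^ ν * (t - r) ^ (-b)) *
            (s ^ (-c) * (s ^ μ * (s - r) ^ (-a) + s ^ ν * (s - r) ^ (-b))) :=
            mul_le_mul_of_nonneg_right (hG1 s hs) hX0
    have hmeas1 : Measurable fun s : ℝ => ENNReal.ofReal (s ^ (μ - c) * (s - r) ^ (-a)) :=
      (((measurable_id.pow measurable_const).mul
        ((measurable_id.sub measurable_const).pow measurable_const))).ennreal_ofReal
    calc ∫⁻ s in Ioo r m, ENNReal.ofReal
          ((t ^ μ * (t - s) ^ (-a) + t ^ ν * (t - s) ^ (-b)) * s ^ (-c) *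
            (s ^ μ * (s - r) ^ (-a) + s ^ ν * (s - r) ^ (-b)))
        ≤ ∫⁻ s in Ioo r m,
            ENNReal.ofReal (2 * (t ^ μ * (t - r) ^ (-a) + t ^ ν * (t - r) ^ (-b))) *
            ENNReal.ofReal (s ^ (μ - c) * (s - r) ^ (-a) + s ^ (ν - c) * (s - r) ^ (-b)) :=
          setLIntegral_mono' measurableSet_Ioo hmono
      _ = ENNReal.ofReal (2 * (t ^ μ * (t - r) ^ (-a) + t ^ ν * (t - r) ^ (-b))) *
          ∫⁻ s in Ioo r m,
            ENNReal.ofReal (s ^ (μ - c) * (s - r) ^ (-a) + s ^ (ν - c) * (s - r) ^ (-b)) :=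
          lintegral_const_mul' _ _ ENNReal.ofReal_ne_top
      _ ≤ ENNReal.ofReal (2 * (t ^ μ * (t - r) ^ (-a) + t ^ ν * (t - r) ^ (-b))) *
          (ENNReal.ofReal D₁ + ENNReal.ofReal D₂) := by
          apply mul_le_mul_right
          calc ∫⁻ s in Ioo r m,
                ENNReal.ofReal (s ^ (μ - c) * (s - r) ^ (-a) + s ^ (ν - c) * (s - r) ^ (-b))
              ≤ ∫⁻ s in Ioo r m,
                (ENNReal.ofReal (s ^ (μ - c) * (s - r) ^ (-a)) +
                  ENNReal.ofReal (s ^ (ν - c) * (s - r) ^ (-b))) :=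
                lintegral_mono fun s => ENNReal.ofReal_add_le
            _ = (∫⁻ s in Ioo r m, ENNReal.ofReal (s ^ (μ - c) * (s - r) ^ (-a))) +
                ∫⁻ s in Ioo r m, ENNReal.ofReal (s ^ (ν - c) * (s - r) ^ (-b)) :=
                lintegral_add_left hmeas1 _
            _ ≤ ENNReal.ofReal D₁ + ENNReal.ofReal D₂ :=
                add_le_add (hD₁b r m hr0 hrm (by linarith))
                  (hD₂b r m hr0 hrm (by linarith))
      _ = ENNReal.ofReal (2 * (D₁ + D₂) *
            (t ^ μ * (t - r) ^ (-a) + t ^ ν * (t - r) ^ (-b))) := by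
          rw [← ENNReal.ofReal_add hD₁.le hD₂.le,
            ← ENNReal.ofReal_mul (by linarith [hGtr0])]
          congr 1; ring
  have hpart2 : ∫⁻ s in Ico m t, ENNReal.ofReal
        ((t ^ μ * (t - s) ^ (-a) + t ^ ν * (t - s) ^ (-b)) * s ^ (-c) *
          (s ^ μ * (s - r) ^ (-a) + s ^ ν * (s - r) ^ (-b)))
      ≤ ENNReal.ofReal (4 * K * T ^ (κ + 1 - c) *
          (t ^ μ * (t - r) ^ (-a) + t ^ ν * (t - r) ^ (-b))) := by
    rw [← Measure.restrict_congr_set Ioo_ae_eq_Ico]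
    have h4c0 : (0:ℝ) ≤ 4 * t ^ (-c) * (t ^ μ * (t - r) ^ (-a) + t ^ ν * (t - r) ^ (-b)) :=
      mul_nonneg (mul_nonneg (by norm_num) (Real.rpow_nonneg ht0.le _)) hGtr0
    have hmono : ∀ s ∈ Ioo m t, ENNReal.ofReal
        ((t ^ μ * (t - s) ^ (-a) + t ^ ν * (t - s) ^ (-b)) * s ^ (-c) *
          (s ^ μ * (s - r) ^ (-a) + s ^ ν * (s - r) ^ (-b)))
        ≤ ENNReal.ofReal (4 * t ^ (-c) * (t ^ μ * (t - r) ^ (-a) + t ^ ν * (t - r) ^ (-b))) *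
          ENNReal.ofReal (t ^ μ * (t - s) ^ (-a) + t ^ ν * (t - s) ^ (-b)) := by
      intro s hs
      have hs0 : (0:ℝ) < s := lt_trans hm0 hs.1
      have hts0 : (0:ℝ) ≤ t - s := by linarith [hs.2]
      have hsr0 : (0:ℝ) ≤ s - r := by rw [hm] at hs; linarith [hs.1]
      have hGts0 : 0 ≤ t ^ μ * (t - s) ^ (-a) + t ^ ν * (t - s) ^ (-b) :=
        add_nonneg (mul_nonneg (Real.rpow_nonneg ht0.le _) (Real.rpow_nonneg hts0 _))
          (mul_nonneg (Real.rpow_nonneg ht0.le _) (Real.rpow_nonneg hts0 _))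
      have hGsr0 : 0 ≤ s ^ μ * (s - r) ^ (-a) + s ^ ν * (s - r) ^ (-b) :=
        add_nonneg (mul_nonneg (Real.rpow_nonneg hs0.le _) (Real.rpow_nonneg hsr0 _))
          (mul_nonneg (Real.rpow_nonneg hs0.le _) (Real.rpow_nonneg hsr0 _))
      have hsc : s ^ (-c) ≤ 2 * t ^ (-c) := by
        have ht2 : (0:ℝ) < t / 2 := by linarith
        have hms : t / 2 ≤ s := by rw [hm] at hs; linarith [hs.1]
        calc s ^ (-c) ≤ (t / 2) ^ (-c) :=
              Real.rpow_le_rpow_of_nonpos ht2 hms (by linarith)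
          _ = t ^ (-c) * 2 ^ c := by
              rw [Real.div_rpow ht0.le (by norm_num : (0:ℝ) ≤ 2),
                Real.rpow_neg (by norm_num : (0:ℝ) ≤ 2), div_inv_eq_mul]
          _ ≤ t ^ (-c) * 2 := by
              have h2c : (2:ℝ) ^ c ≤ 2 := by
                calc (2:ℝ) ^ c ≤ 2 ^ (1:ℝ) :=
                      Real.rpow_le_rpow_of_exponent_le one_le_two hc1.le
                  _ = 2 := Real.rpow_one 2
              exact mul_le_mul_of_nonneg_left h2c (Real.rpow_nonneg ht0.le _)
          _ = 2 * t ^ (-c) := mul_comm _ _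
      rw [← ENNReal.ofReal_mul h4c0]
      apply ENNReal.ofReal_le_ofReal
      calc (t ^ μ * (t - s) ^ (-a) + t ^ ν * (t - s) ^ (-b)) * s ^ (-c) *
            (s ^ μ * (s - r) ^ (-a) + s ^ ν * (s - r) ^ (-b))
          ≤ (t ^ μ * (t - s) ^ (-a) + t ^ ν * (t - s) ^ (-b)) * (2 * t ^ (-c)) *
            (2 * (t ^ μ * (t - r) ^ (-a) + t ^ ν * (t - r) ^ (-b))) := by
            apply mul_le_mul
            · exact mul_le_mul_of_nonneg_left hsc hGts0
            · exact hG2 s hs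
            · exact hGsr0
            · exact mul_nonneg hGts0 (by positivity)
        _ = 4 * t ^ (-c) * (t ^ μ * (t - r) ^ (-a) + t ^ ν * (t - r) ^ (-b)) *
            (t ^ μ * (t - s) ^ (-a) + t ^ ν * (t - s) ^ (-b)) := by ring
    have hmeas2 : Measurable fun s : ℝ => ENNReal.ofReal (t ^ μ * (t - s) ^ (-a)) :=
      ((measurable_const.mul
        ((measurable_const.sub measurable_id).pow measurable_const))).ennreal_ofReal
    have hGint : ∫⁻ s in Ioo m t,
        ENNReal.ofReal (t ^ μ * (t - s) ^ (-a) + t ^ ν * (t - s) ^ (-b))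
        ≤ ENNReal.ofReal (t ^ (κ + 1) * K) := by
      calc ∫⁻ s in Ioo m t,
            ENNReal.ofReal (t ^ μ * (t - s) ^ (-a) + t ^ ν * (t - s) ^ (-b))
          ≤ ∫⁻ s in Ioo m t, (ENNReal.ofReal (t ^ μ * (t - s) ^ (-a)) +
              ENNReal.ofReal (t ^ ν * (t - s) ^ (-b))) :=
            lintegral_mono fun s => ENNReal.ofReal_add_le
        _ = (∫⁻ s in Ioo m t, ENNReal.ofReal (t ^ μ * (t - s) ^ (-a))) +
            ∫⁻ s in Ioo m t, ENNReal.ofReal (t ^ ν * (t - s) ^ (-b)) :=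
            lintegral_add_left hmeas2 _
        _ ≤ ENNReal.ofReal (t ^ μ) * ENNReal.ofReal ((t - m) ^ (-a + 1) / (-a + 1)) +
            ENNReal.ofReal (t ^ ν) * ENNReal.ofReal ((t - m) ^ (-b + 1) / (-b + 1)) := by
            have e1 : ∫⁻ s in Ioo m t, ENNReal.ofReal (t ^ μ * (t - s) ^ (-a)) =
                ENNReal.ofReal (t ^ μ) * ∫⁻ s in Ioo m t, ENNReal.ofReal ((t - s) ^ (-a)) := by
              simp_rw [ENNReal.ofReal_mul (Real.rpow_nonneg ht0.le μ)]
              exact lintegral_const_mul' _ _ ENNReal.ofReal_ne_top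
            have e2 : ∫⁻ s in Ioo m t, ENNReal.ofReal (t ^ ν * (t - s) ^ (-b)) =
                ENNReal.ofReal (t ^ ν) * ∫⁻ s in Ioo m t, ENNReal.ofReal ((t - s) ^ (-b)) := by
              simp_rw [ENNReal.ofReal_mul (Real.rpow_nonneg ht0.le ν)]
              exact lintegral_const_mul' _ _ ENNReal.ofReal_ne_top
            rw [e1, e2]
            exact add_le_add
              (mul_le_mul_right (lint_Ioo_sub_right _ hmt (by linarith)) _)
              (mul_le_mul_right (lint_Ioo_sub_right _ hmt (by linarith)) _)
        _ ≤ ENNReal.ofReal (t ^ (κ + 1) * K) := by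
            rw [← ENNReal.ofReal_mul (Real.rpow_nonneg ht0.le μ),
              ← ENNReal.ofReal_mul (Real.rpow_nonneg ht0.le ν),
              ← ENNReal.ofReal_add
                (mul_nonneg (Real.rpow_nonneg ht0.le _)
                  (div_nonneg (Real.rpow_nonneg (by linarith : (0:ℝ) ≤ t - m) _)
                    (by linarith : (0:ℝ) ≤ -a + 1)))
                (mul_nonneg (Real.rpow_nonneg ht0.le _)
                  (div_nonneg (Real.rpow_nonneg (by linarith : (0:ℝ) ≤ t - m) _)
                    (by linarith : (0:ℝ) ≤ -b + 1)))]
            apply ENNReal.ofReal_le_ofReal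
            have htm0 : (0:ℝ) ≤ t - m := by linarith
            have h1 : (t - m) ^ (-a + 1) ≤ t ^ (-a + 1) :=
              Real.rpow_le_rpow htm0 (by linarith [hm0]) (by linarith)
            have h2 : (t - m) ^ (-b + 1) ≤ t ^ (-b + 1) :=
              Real.rpow_le_rpow htm0 (by linarith [hm0]) (by linarith)
            have e3 : t ^ μ * (t ^ (-a + 1) / (-a + 1)) = t ^ (κ + 1) * (1 / (1 - a)) := by
              rw [show t ^ μ * (t ^ (-a + 1) / (-a + 1)) =
                  (t ^ μ * t ^ (-a + 1)) * (1 / (-a + 1)) by ring,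
                ← Real.rpow_add ht0, show μ + (-a + 1) = κ + 1 by linarith,
                show -a + 1 = 1 - a by ring]
            have e4 : t ^ ν * (t ^ (-b + 1) / (-b + 1)) = t ^ (κ + 1) * (1 / (1 - b)) := by
              rw [show t ^ ν * (t ^ (-b + 1) / (-b + 1)) =
                  (t ^ ν * t ^ (-b + 1)) * (1 / (-b + 1)) by ring,
                ← Real.rpow_add ht0, show ν + (-b + 1) = κ + 1 by linarith,
                show -b + 1 = 1 - b by ring]
            calc t ^ μ * ((t - m) ^ (-a + 1) / (-a + 1)) +
                  t ^ ν * ((t - m) ^ (-b + 1) / (-b + 1))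
                ≤ t ^ μ * (t ^ (-a + 1) / (-a + 1)) + t ^ ν * (t ^ (-b + 1) / (-b + 1)) := by
                  apply add_le_add
                  · exact mul_le_mul_of_nonneg_left
                      ((div_le_div_iff_of_pos_right (by linarith)).mpr h1) (Real.rpow_nonneg ht0.le _)
                  · exact mul_le_mul_of_nonneg_left
                      ((div_le_div_iff_of_pos_right (by linarith)).mpr h2) (Real.rpow_nonneg ht0.le _)
              _ = t ^ (κ + 1) * K := by rw [e3, e4, hK]; ring
    calc ∫⁻ s in Ioo m t, ENNReal.ofReal
          ((t ^ μ * (t - s) ^ (-a) + t ^ ν * (t - s) ^ (-b)) * s ^ (-c) *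
            (s ^ μ * (s - r) ^ (-a) + s ^ ν * (s - r) ^ (-b)))
        ≤ ∫⁻ s in Ioo m t,
            ENNReal.ofReal (4 * t ^ (-c) * (t ^ μ * (t - r) ^ (-a) + t ^ ν * (t - r) ^ (-b))) *
            ENNReal.ofReal (t ^ μ * (t - s) ^ (-a) + t ^ ν * (t - s) ^ (-b)) :=
          setLIntegral_mono' measurableSet_Ioo hmono
      _ = ENNReal.ofReal (4 * t ^ (-c) * (t ^ μ * (t - r) ^ (-a) + t ^ ν * (t - r) ^ (-b))) *
          ∫⁻ s in Ioo m t, ENNReal.ofReal (t ^ μ * (t - s) ^ (-a) + t ^ ν * (t - s) ^ (-b)) :=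
          lintegral_const_mul' _ _ ENNReal.ofReal_ne_top
      _ ≤ ENNReal.ofReal (4 * t ^ (-c) * (t ^ μ * (t - r) ^ (-a) + t ^ ν * (t - r) ^ (-b))) *
          ENNReal.ofReal (t ^ (κ + 1) * K) := mul_le_mul_right hGint _
      _ ≤ ENNReal.ofReal (4 * K * T ^ (κ + 1 - c) *
            (t ^ μ * (t - r) ^ (-a) + t ^ ν * (t - r) ^ (-b))) := by
          rw [← ENNReal.ofReal_mul h4c0]
          apply ENNReal.ofReal_le_ofReal
          have h4K0 : (0:ℝ) ≤ 4 * K * (t ^ μ * (t - r) ^ (-a) + t ^ ν * (t - r) ^ (-b)) :=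
            mul_nonneg (mul_nonneg (by norm_num) hKpos.le) hGtr0
          calc 4 * t ^ (-c) * (t ^ μ * (t - r) ^ (-a) + t ^ ν * (t - r) ^ (-b)) *
                (t ^ (κ + 1) * K)
              = 4 * K * (t ^ μ * (t - r) ^ (-a) + t ^ ν * (t - r) ^ (-b)) *
                (t ^ (-c) * t ^ (κ + 1)) := by ring
            _ = 4 * K * (t ^ μ * (t - r) ^ (-a) + t ^ ν * (t - r) ^ (-b)) * t ^ (κ + 1 - c) := by
                rw [← Real.rpow_add ht0, show -c + (κ + 1) = κ + 1 - c by ring]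
            _ ≤ 4 * K * (t ^ μ * (t - r) ^ (-a) + t ^ ν * (t - r) ^ (-b)) * T ^ (κ + 1 - c) :=
                mul_le_mul_of_nonneg_left (Real.rpow_le_rpow ht0.le htT hκc.le) h4K0
            _ = 4 * K * T ^ (κ + 1 - c) *
                (t ^ μ * (t - r) ^ (-a) + t ^ ν * (t - r) ^ (-b)) := by ring
  calc (∫⁻ s in Ioo r m, ENNReal.ofReal
          ((t ^ μ * (t - s) ^ (-a) + t ^ ν * (t - s) ^ (-b)) * s ^ (-c) *
            (s ^ μ * (s - r) ^ (-a) + s ^ ν * (s - r) ^ (-b)))) +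
        ∫⁻ s in Ico m t, ENNReal.ofReal
          ((t ^ μ * (t - s) ^ (-a) + t ^ ν * (t - s) ^ (-b)) * s ^ (-c) *
            (s ^ μ * (s - r) ^ (-a) + s ^ ν * (s - r) ^ (-b)))
      ≤ ENNReal.ofReal (2 * (D₁ + D₂) *
          (t ^ μ * (t - r) ^ (-a) + t ^ ν * (t - r) ^ (-b))) +
        ENNReal.ofReal (4 * K * T ^ (κ + 1 - c) *
          (t ^ μ * (t - r) ^ (-a) + t ^ ν * (t - r) ^ (-b))) := add_le_add hpart1 hpart2
    _ = ENNReal.ofReal ((2 * (D₁ + D₂) + 4 * K * T ^ (κ + 1 - c)) *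
          (t ^ μ * (t - r) ^ (-a) + t ^ ν * (t - r) ^ (-b))) := by
        rw [← ENNReal.ofReal_add (mul_nonneg (by positivity) hGtr0)
          (mul_nonneg (by positivity) hGtr0)]
        congr 1; ring

end

lemma Gker_nonneg {α β₀ Λ β t s : ℝ} (ht : 0 ≤ t) (hst : s ≤ t) : 0 ≤ Gker α β₀ Λ β t s := by
  unfold Gker
  exact add_nonneg
    (mul_nonneg (Real.rpow_nonneg ht _) (Real.rpow_nonneg (by linarith) _))
    (mul_nonneg (Real.rpow_nonneg ht _) (Real.rpow_nonneg (by linarith) _))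

lemma Gker_measurable (α β₀ Λ β : ℝ) : Measurable fun p : ℝ × ℝ => Gker α β₀ Λ β p.1 p.2 := by
  unfold Gker
  exact ((measurable_fst.pow measurable_const).mul
      ((measurable_fst.sub measurable_snd).pow measurable_const)).add
    ((measurable_fst.pow measurable_const).mul
      ((measurable_fst.sub measurable_snd).pow measurable_const))

lemma Gker_key (α β₀ Λ T β γ : ℝ)
    (hα : α ∈ Ioc (1:ℝ) 2) (hβ₀ : β₀ ∈ Ioo (-1:ℝ) 0) (hΛ : Λ ∈ Ioo (0:ℝ) (α - 1)) (hT : 0 < T)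
    (hβ : β ∈ Ico (0:ℝ) (min (β₀ + α) (α - Λ)))
    (hγ : γ ∈ Ico (0:ℝ) (min α (α - 1 + β - β₀))) :
    ∃ C : ℝ, 0 < C ∧ ∀ t ∈ Ioc (0:ℝ) T, ∀ r ∈ Ioo (0:ℝ) t,
      ∫⁻ s in Ioo r t, ENNReal.ofReal
          (Gker α β₀ Λ β t s * s ^ (-(γ / α)) * Gker α β₀ Λ β s r)
        ≤ ENNReal.ofReal (C * Gker α β₀ Λ β t r) := by
  have hα0 : (0:ℝ) < α := by linarith [hα.1]
  have hγα : γ < α - 1 + β - β₀ := lt_of_lt_of_le hγ.2 (min_le_right _ _)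
  obtain ⟨C, hC, h⟩ := two_term_key (T := T) (a := 1/α) (b := (Λ + β₀ + 1)/α)
    (μ := (β - β₀)/α) (ν := (β + Λ)/α) (c := γ/α) (κ := (β - β₀ - 1)/α)
    hT (by positivity) ((div_lt_one hα0).mpr hα.1)
    (div_pos (by linarith [hΛ.1, hβ₀.1]) hα0)
    ((div_lt_one hα0).mpr (by linarith [hΛ.2, hβ₀.2]))
    (div_nonneg (by linarith [hβ.1, hβ₀.2]) hα0.le)
    (div_nonneg (by linarith [hβ.1, hΛ.1]) hα0.le)
    (div_nonneg hγ.1 hα0.le)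
    ((div_lt_one hα0).mpr (lt_of_lt_of_le hγ.2 (min_le_left _ _)))
    (by ring) (by ring)
    (by rw [div_add' _ _ _ (ne_of_gt hα0)]
        exact (div_lt_div_iff_of_pos_right hα0).mpr (by linarith))
  refine ⟨C, hC, fun t ht r hr => ?_⟩
  simpa only [Gker] using h t ht r hr

/-- the composition of the kinetic kernel with itself (with an extra
singular factor `s^{-γ/α}`) is controlled by a single kernel integral. -/
theorem Gker_composition
    (α β₀ Λ T β γ : ℝ)
    (hα : α ∈ Ioc (1 : ℝ) 2) (hβ₀ : β₀ ∈ Ioo (-1 : ℝ) 0)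
    (hΛ : Λ ∈ Ioo (0 : ℝ) (α - 1)) (hT : 0 < T)
    (hβ : β ∈ Ico (0 : ℝ) (min (β₀ + α) (α - Λ)))
    (hγ : γ ∈ Ico (0 : ℝ) (min α (α - 1 + β - β₀))) :
    ∃ C : ℝ, 0 < C ∧ ∀ t ∈ Ioc (0 : ℝ) T, ∀ f : ℝ → ℝ,
      Measurable f → (∀ s, 0 ≤ f s) →
      (∫⁻ s in Ioo (0 : ℝ) t,
          ENNReal.ofReal (Gker α β₀ Λ β t s * s ^ (-(γ / α))) *
            ∫⁻ r in Ioo (0 : ℝ) s, ENNReal.ofReal (Gker α β₀ Λ β s r * f r)) ≤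
        ENNReal.ofReal C *
          ∫⁻ s in Ioo (0 : ℝ) t, ENNReal.ofReal (Gker α β₀ Λ β t s * f s) := by
  obtain ⟨C, hC, hkey⟩ := Gker_key α β₀ Λ T β γ hα hβ₀ hΛ hT hβ hγ
  refine ⟨C, hC, fun t ht f hf hf0 => ?_⟩
  have hGm := Gker_measurable α β₀ Λ β
  set F : ℝ → ℝ → ENNReal := fun s r =>
    (Ioo (0:ℝ) s).indicator (fun r' => ENNReal.ofReal (Gker α β₀ Λ β t s * s ^ (-(γ / α))) *
      ENNReal.ofReal (Gker α β₀ Λ β s r' * f r')) r with hF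
  have hFmeas : Measurable (Function.uncurry F) := by
    have he : Function.uncurry F = fun q : ℝ × ℝ =>
        Set.indicator {q : ℝ × ℝ | 0 < q.2 ∧ q.2 < q.1}
          (fun q => ENNReal.ofReal (Gker α β₀ Λ β t q.1 * q.1 ^ (-(γ / α))) *
            ENNReal.ofReal (Gker α β₀ Λ β q.1 q.2 * f q.2)) q := by
      funext q
      simp only [hF, Function.uncurry, Set.indicator_apply, mem_Ioo, mem_setOf_eq]
    rw [he]
    apply Measurable.indicator
    · exact (((hGm.comp (measurable_const.prodMk measurable_fst)).mul
          (measurable_fst.pow measurable_const)).ennreal_ofReal).mul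
        ((hGm.mul (hf.comp measurable_snd)).ennreal_ofReal)
    · exact (measurableSet_lt measurable_const measurable_snd).inter
        (measurableSet_lt measurable_snd measurable_fst)
  have hLHS : (∫⁻ s in Ioo (0 : ℝ) t,
      ENNReal.ofReal (Gker α β₀ Λ β t s * s ^ (-(γ / α))) *
        ∫⁻ r in Ioo (0 : ℝ) s, ENNReal.ofReal (Gker α β₀ Λ β s r * f r)) =
      ∫⁻ s in Ioo (0:ℝ) t, ∫⁻ r, F s r := by
    apply lintegral_congr
    intro s
    simp only [hF]
    rw [lintegral_indicator measurableSet_Ioo, lintegral_const_mul' _ _ ENNReal.ofReal_ne_top]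
  rw [hLHS, lintegral_lintegral_swap hFmeas.aemeasurable]
  have hbound : ∀ r : ℝ, (∫⁻ s in Ioo (0:ℝ) t, F s r) ≤
      (Ioo (0:ℝ) t).indicator
        (fun r' => ENNReal.ofReal C * ENNReal.ofReal (Gker α β₀ Λ β t r' * f r')) r := by
    intro r
    by_cases hr : r ∈ Ioo (0:ℝ) t
    · rw [indicator_of_mem hr]
      have hstep : ∀ s ∈ Ioo (0:ℝ) t, F s r =
          (Ioi r).indicator (fun s' => ENNReal.ofReal (Gker α β₀ Λ β t s' * s' ^ (-(γ / α)) *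
            Gker α β₀ Λ β s' r) * ENNReal.ofReal (f r)) s := by
        intro s hs
        simp only [hF]
        by_cases hsr : r < s
        · rw [Set.indicator_of_mem (mem_Ioo.mpr ⟨hr.1, hsr⟩),
            Set.indicator_of_mem (mem_Ioi.mpr hsr)]
          have h1 : 0 ≤ Gker α β₀ Λ β s r :=
            Gker_nonneg (le_of_lt (lt_trans hr.1 hsr)) hsr.le
          have h2 : 0 ≤ Gker α β₀ Λ β t s * s ^ (-(γ / α)) :=
            mul_nonneg (Gker_nonneg (le_of_lt (lt_trans hs.1 hs.2)) hs.2.le)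
              (Real.rpow_nonneg hs.1.le _)
          rw [ENNReal.ofReal_mul h1, ← mul_assoc, ← ENNReal.ofReal_mul h2]
        · rw [Set.indicator_of_notMem (fun hmem => hsr hmem.2),
            Set.indicator_of_notMem (by simpa [mem_Ioi] using hsr)]
      rw [setLIntegral_congr_fun measurableSet_Ioo hstep]
      rw [lintegral_indicator measurableSet_Ioi,
        Measure.restrict_restrict measurableSet_Ioi]
      have hset : Ioi r ∩ Ioo (0:ℝ) t = Ioo r t := by
        ext x
        simp only [mem_inter_iff, mem_Ioi, mem_Ioo]
        exact ⟨fun h => ⟨h.1, h.2.2⟩, fun h => ⟨h.1, lt_trans hr.1 h.1, h.2⟩⟩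
      rw [hset, lintegral_mul_const' _ _ ENNReal.ofReal_ne_top]
      calc (∫⁻ s in Ioo r t, ENNReal.ofReal (Gker α β₀ Λ β t s * s ^ (-(γ / α)) *
              Gker α β₀ Λ β s r)) * ENNReal.ofReal (f r)
          ≤ ENNReal.ofReal (C * Gker α β₀ Λ β t r) * ENNReal.ofReal (f r) :=
            mul_le_mul_left (hkey t ht r hr) _
        _ = ENNReal.ofReal C * ENNReal.ofReal (Gker α β₀ Λ β t r * f r) := by
            rw [ENNReal.ofReal_mul hC.le, mul_assoc,
              ← ENNReal.ofReal_mul (Gker_nonneg (le_of_lt (lt_trans hr.1 hr.2)) hr.2.le)]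
    · rw [indicator_of_notMem hr]
      have hzero : ∀ s ∈ Ioo (0:ℝ) t, F s r = 0 := by
        intro s hs
        simp only [hF]
        apply Set.indicator_of_notMem
        intro hmem
        exact hr ⟨hmem.1, lt_trans hmem.2 hs.2⟩
      rw [setLIntegral_congr_fun measurableSet_Ioo hzero, lintegral_zero]
  calc ∫⁻ r, ∫⁻ s in Ioo (0:ℝ) t, F s r
      ≤ ∫⁻ r, (Ioo (0:ℝ) t).indicator
          (fun r' => ENNReal.ofReal C * ENNReal.ofReal (Gker α β₀ Λ β t r' * f r')) r :=
        lintegral_mono hbound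
    _ = ∫⁻ r in Ioo (0:ℝ) t,
          ENNReal.ofReal C * ENNReal.ofReal (Gker α β₀ Λ β t r * f r) :=
        lintegral_indicator measurableSet_Ioo _
    _ = ENNReal.ofReal C *
          ∫⁻ r in Ioo (0:ℝ) t, ENNReal.ofReal (Gker α β₀ Λ β t r * f r) :=
        lintegral_const_mul' _ _ ENNReal.ofReal_ne_top
end

section
/- Let d ≥ 1, let p = (p_x, p_v) with p_x, p_v ∈ [1, ∞], and set q := min(p_x, p_v, 2). Then for every finite family of Borel measurable functions f₁, …, f_N : ℝ^d × ℝ^d → ℝ one has ‖ Σ_{i=1}^N |fᵢ|² ‖_{p/2} ≤ ( Σ_{i=1}^N ‖fᵢ‖_p^q )^{2/q}, where p/2 := (p_x/2, p_v/2) (with the convention ∞/2 = ∞) and ‖·‖_{p/2} denotes the same iterated-integral expression even when a component of p/2 is smaller than 1. -/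
open MeasureTheory ENNReal

/-- Euclidean space `ℝ^d`. -/
abbrev Euc (d : ℕ) := EuclideanSpace ℝ (Fin d)

/-- The `L^p`-type quantity `(∫ g^p dμ)^{1/p}` (ess-sup for `p = ∞`) for an
`ℝ≥0∞`-valued function `g`. -/
noncomputable def eLp {X : Type*} [MeasurableSpace X] (μ : Measure X) (p : ℝ≥0∞)
    (g : X → ℝ≥0∞) : ℝ≥0∞ :=
  if p = ∞ then essSup g μ else (∫⁻ a, g a ^ p.toReal ∂μ) ^ (1 / p.toReal)

/-- Mixed (iterated) norm `‖f‖_{(p_x,p_v)}` of an `ℝ≥0∞`-valued function on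
`ℝ^d × ℝ^d`: first the `L^{p_x}` quantity in `x`, then `L^{p_v}` in `v`. -/
noncomputable def mixedNormE (d : ℕ) (px pv : ℝ≥0∞)
    (f : Euc d × Euc d → ℝ≥0∞) : ℝ≥0∞ :=
  eLp volume pv fun v => eLp volume px fun x => f (x, v)

/-- Mixed (iterated) norm `‖f‖_{(p_x,p_v)}` of a real-valued function on `ℝ^d × ℝ^d`. -/
noncomputable def mixedNorm (d : ℕ) (px pv : ℝ≥0∞)
    (f : Euc d × Euc d → ℝ) : ℝ≥0∞ :=
  mixedNormE d px pv fun z => (‖f z‖₊ : ℝ≥0∞)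

section Aux

variable {X : Type*} [MeasurableSpace X] {μ : Measure X}

lemma eLp_mono {p : ℝ≥0∞} {g g' : X → ℝ≥0∞} (h : ∀ a, g a ≤ g' a) :
    eLp μ p g ≤ eLp μ p g' := by
  unfold eLp
  split_ifs
  · exact essSup_mono_ae (Filter.Eventually.of_forall h)
  · exact ENNReal.rpow_le_rpow
      (lintegral_mono fun a => ENNReal.rpow_le_rpow (h a) ENNReal.toReal_nonneg)
      (by positivity)

lemma eLp_rpow (p : ℝ≥0∞) (c : ℝ≥0∞) (hc0 : c ≠ 0) (hct : c ≠ ∞) (g : X → ℝ≥0∞) :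
    eLp μ p (fun a => g a ^ c.toReal) = (eLp μ (p * c) g) ^ c.toReal := by
  have hcr : 0 < c.toReal := ENNReal.toReal_pos hc0 hct
  rcases eq_or_ne p ∞ with hp | hp
  · subst hp
    rw [eLp, eLp, if_pos rfl, if_pos (by rw [ENNReal.top_mul hc0])]
    exact ((ENNReal.orderIsoRpow c.toReal hcr).essSup_apply g μ).symm
  rcases eq_or_ne p 0 with hp0 | hp0
  · subst hp0
    simp [eLp, ENNReal.rpow_zero]
  · have hpr : 0 < p.toReal := ENNReal.toReal_pos hp0 hp
    have hpc : p * c ≠ ∞ := ENNReal.mul_ne_top hp hct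
    rw [eLp, eLp, if_neg hp, if_neg hpc, ENNReal.toReal_mul]
    have h1 : ∀ a, (g a ^ c.toReal) ^ p.toReal = g a ^ (p.toReal * c.toReal) := by
      intro a
      rw [← ENNReal.rpow_mul, mul_comm]
    simp_rw [h1]
    rw [← ENNReal.rpow_mul]
    congr 1
    field_simp

lemma eLp_add_le {p : ℝ≥0∞} (hp : 1 ≤ p) {f g : X → ℝ≥0∞}
    (hfm : AEMeasurable f μ) (hgm : AEMeasurable g μ) :
    eLp μ p (fun a => f a + g a) ≤ eLp μ p f + eLp μ p g := by
  rcases eq_or_ne p ∞ with h | h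
  · subst h
    simp only [eLp, if_pos rfl]
    refine essSup_le_of_ae_le _ ?_
    filter_upwards [ENNReal.ae_le_essSup f, ENNReal.ae_le_essSup g] with a h1 h2
    exact add_le_add h1 h2
  · simp only [eLp, if_neg h]
    have hp1 : 1 ≤ p.toReal := by
      rw [← ENNReal.toReal_one]; exact ENNReal.toReal_mono h hp
    exact ENNReal.lintegral_Lp_add_le hfm hgm hp1

lemma eLp_zero_fun {p : ℝ≥0∞} (hp : 1 ≤ p) : eLp μ p (fun _ => (0 : ℝ≥0∞)) = 0 := by
  rcases eq_or_ne p ∞ with h | h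
  · subst h
    simp only [eLp, if_pos rfl]
    exact essSup_const_bot
  · have hpr : 0 < p.toReal :=
      ENNReal.toReal_pos (fun h0 => by simp [h0] at hp) h
    rw [eLp, if_neg h]
    simp only [ENNReal.zero_rpow_of_pos hpr, lintegral_zero]
    exact ENNReal.zero_rpow_of_pos (one_div_pos.mpr hpr)

lemma eLp_sum_le {p : ℝ≥0∞} (hp : 1 ≤ p) {ι : Type*} (s : Finset ι)
    (g : ι → X → ℝ≥0∞) (hg : ∀ i, Measurable (g i)) :
    eLp μ p (fun a => ∑ i ∈ s, g i a) ≤ ∑ i ∈ s, eLp μ p (g i) := by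
  classical
  induction s using Finset.induction_on with
  | empty => simp [eLp_zero_fun hp]
  | @insert j s hj ih =>
    simp only [Finset.sum_insert hj]
    calc eLp μ p (fun a => g j a + ∑ i ∈ s, g i a)
        ≤ eLp μ p (g j) + eLp μ p (fun a => ∑ i ∈ s, g i a) :=
          eLp_add_le hp (hg j).aemeasurable
            (Finset.measurable_sum s fun i _ => hg i).aemeasurable
      _ ≤ eLp μ p (g j) + ∑ i ∈ s, eLp μ p (g i) := add_le_add le_rfl ih

lemma essSup_eq_iSup_rat (μ : Measure X) (f : X → ℝ≥0∞) :
    essSup f μ =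
      ⨆ q : ℚ, if μ {x | ENNReal.ofReal q < f x} = 0 then 0 else ENNReal.ofReal q := by
  set S := ⨆ q : ℚ, if μ {x | ENNReal.ofReal q < f x} = 0 then 0 else ENNReal.ofReal q with hS
  apply le_antisymm
  · have hnull : ∀ q : ℚ, S < ENNReal.ofReal q → μ {x | ENNReal.ofReal q < f x} = 0 := by
      intro q hq
      by_contra h
      have hle : ENNReal.ofReal q ≤ S := by
        refine le_trans ?_ (le_iSup (fun q : ℚ =>
          if μ {x | ENNReal.ofReal q < f x} = 0 then 0 else ENNReal.ofReal q) q)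
        rw [if_neg h]
      exact absurd hq (not_lt.mpr hle)
    refine essSup_le_of_ae_le S (ae_iff.mpr ?_)
    have hsub : {x | ¬ f x ≤ S} ⊆
        ⋃ (q : ℚ) (_ : S < ENNReal.ofReal q), {x | ENNReal.ofReal q < f x} := by
      intro x hx
      simp only [Set.mem_setOf_eq, not_le] at hx
      obtain ⟨q, _, h1, h2⟩ := ENNReal.lt_iff_exists_rat_btwn.mp hx
      refine Set.mem_iUnion.mpr ⟨q, Set.mem_iUnion.mpr ⟨h1, h2⟩⟩
    refine measure_mono_null hsub (measure_iUnion_null fun q => measure_iUnion_null fun hq =>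
      hnull q hq)
  · refine iSup_le fun q => ?_
    split_ifs with h
    · exact zero_le
    · by_contra hlt
      push_neg at hlt
      refine h (measure_mono_null ?_ (ae_iff.mp (ENNReal.ae_le_essSup f)))
      intro x hx
      simp only [Set.mem_setOf_eq] at hx ⊢
      exact not_le.mpr (lt_of_lt_of_le hlt hx.le)

end Aux

lemma measurable_eLp_left {d : ℕ} (p : ℝ≥0∞) (h : Euc d × Euc d → ℝ≥0∞)
    (hm : Measurable h) :
    Measurable fun v : Euc d => eLp volume p (fun x => h (x, v)) := by
  rcases eq_or_ne p ∞ with hp | hp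
  · subst hp
    have he : (fun v : Euc d => eLp volume ⊤ fun x => h (x, v))
        = fun v => ⨆ q : ℚ,
            if volume ((fun x : Euc d => (x, v)) ⁻¹' {z | ENNReal.ofReal q < h z}) = 0 then 0
            else ENNReal.ofReal q := by
      funext v
      rw [eLp, if_pos rfl, essSup_eq_iSup_rat]
      rfl
    rw [he]
    refine Measurable.iSup fun q => ?_
    have hs : MeasurableSet {z : Euc d × Euc d | ENNReal.ofReal q < h z} :=
      measurableSet_lt measurable_const hm
    have hμ : Measurable fun v : Euc d =>
        volume ((fun x : Euc d => (x, v)) ⁻¹' {z | ENNReal.ofReal q < h z}) :=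
      measurable_measure_prodMk_right hs
    exact Measurable.ite (hμ (measurableSet_singleton 0)) measurable_const measurable_const
  · have he : (fun v : Euc d => eLp volume p fun x => h (x, v))
        = fun v => (∫⁻ x, h (x, v) ^ p.toReal) ^ (1 / p.toReal) := by
      funext v
      rw [eLp, if_neg hp]
    rw [he]
    have hm2 : Measurable fun z : Euc d × Euc d => h (z.2, z.1) ^ p.toReal :=
      (hm.comp measurable_swap).pow_const _
    exact hm2.lintegral_prod_right'.pow_const _

lemma mixedNormE_mono (d : ℕ) (px pv : ℝ≥0∞) {h h' : Euc d × Euc d → ℝ≥0∞}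
    (hle : ∀ z, h z ≤ h' z) :
    mixedNormE d px pv h ≤ mixedNormE d px pv h' :=
  eLp_mono fun v => eLp_mono fun x => hle (x, v)

lemma mixedNormE_rpow (d : ℕ) (px pv c : ℝ≥0∞) (hc0 : c ≠ 0) (hct : c ≠ ∞)
    (h : Euc d × Euc d → ℝ≥0∞) :
    mixedNormE d px pv (fun z => h z ^ c.toReal)
      = mixedNormE d (px * c) (pv * c) h ^ c.toReal := by
  unfold mixedNormE
  calc eLp volume pv (fun v => eLp volume px fun x => h (x, v) ^ c.toReal)
      = eLp volume pv (fun v => (eLp volume (px * c) fun x => h (x, v)) ^ c.toReal) := by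
        congr 1
        funext v
        exact eLp_rpow px c hc0 hct _
    _ = (eLp volume (pv * c) fun v => eLp volume (px * c) fun x => h (x, v)) ^ c.toReal :=
        eLp_rpow pv c hc0 hct _

lemma mixedNormE_sum_le (d : ℕ) (P1 P2 : ℝ≥0∞) (h1 : 1 ≤ P1) (h2 : 1 ≤ P2)
    {ι : Type*} (s : Finset ι) (g : ι → Euc d × Euc d → ℝ≥0∞)
    (hg : ∀ i, Measurable (g i)) :
    mixedNormE d P1 P2 (fun z => ∑ i ∈ s, g i z) ≤ ∑ i ∈ s, mixedNormE d P1 P2 (g i) := by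
  unfold mixedNormE
  calc eLp volume P2 (fun v => eLp volume P1 fun x => ∑ i ∈ s, g i (x, v))
      ≤ eLp volume P2 (fun v => ∑ i ∈ s, eLp volume P1 fun x => g i (x, v)) := by
        refine eLp_mono fun v => ?_
        exact eLp_sum_le h1 s (fun i x => g i (x, v))
          (fun i => (hg i).comp (measurable_prodMk_right))
    _ ≤ ∑ i ∈ s, eLp volume P2 (fun v => eLp volume P1 fun x => g i (x, v)) :=
        eLp_sum_le h2 s _ (fun i => measurable_eLp_left P1 (g i) (hg i))

lemma sum_rpow_le_rpow_sum' {ι : Type*} (s : Finset ι) (a : ι → ℝ≥0∞) {r : ℝ} (hr : 1 ≤ r) :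
    ∑ i ∈ s, a i ^ r ≤ (∑ i ∈ s, a i) ^ r := by
  classical
  induction s using Finset.induction_on with
  | empty => simp [ENNReal.zero_rpow_of_pos (lt_of_lt_of_le zero_lt_one hr)]
  | @insert j s hj ih =>
    rw [Finset.sum_insert hj, Finset.sum_insert hj]
    calc a j ^ r + ∑ i ∈ s, a i ^ r ≤ a j ^ r + (∑ i ∈ s, a i) ^ r := add_le_add le_rfl ih
      _ ≤ (a j + ∑ i ∈ s, a i) ^ r := ENNReal.add_rpow_le_rpow_add _ _ hr

/-- `‖Σ |fᵢ|²‖_{p/2} ≤ (Σ ‖fᵢ‖_p^q)^{2/q}` with `q = p_x ∧ p_v ∧ 2`. -/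
theorem mixedNorm_sum_sq_le
    (d : ℕ) (hd : 1 ≤ d) (px pv : ℝ≥0∞) (hpx : 1 ≤ px) (hpv : 1 ≤ pv)
    (N : ℕ) (f : Fin N → Euc d × Euc d → ℝ) (hf : ∀ i, Measurable (f i)) :
    mixedNorm d (px / 2) (pv / 2) (fun z => ∑ i, (f i z) ^ 2) ≤
      (∑ i, mixedNorm d px pv (f i) ^ (min px (min pv 2)).toReal) ^
        (2 / (min px (min pv 2)).toReal) := by
  classical
  set Q := min px (min pv 2) with hQdef
  have hQpx : Q ≤ px := min_le_left _ _
  have hQpv : Q ≤ pv := le_trans (min_le_right _ _) (min_le_left _ _)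
  have hQ2 : Q ≤ 2 := le_trans (min_le_right _ _) (min_le_right _ _)
  have hQ1 : 1 ≤ Q := le_min hpx (le_min hpv one_le_two)
  have hQ0 : Q ≠ 0 := (lt_of_lt_of_le zero_lt_one hQ1).ne'
  have h2top : (2 : ℝ≥0∞) ≠ ∞ := by norm_num
  have hQtop : Q ≠ ∞ := ne_top_of_le_ne_top h2top hQ2
  set t := Q.toReal with htdef
  have ht1 : 1 ≤ t := by
    rw [htdef, ← ENNReal.toReal_one]; exact ENNReal.toReal_mono hQtop hQ1
  have ht0 : 0 < t := lt_of_lt_of_le zero_lt_one ht1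
  have ht2 : t ≤ 2 := by
    have := ENNReal.toReal_mono h2top hQ2
    simpa using this
  set g : Fin N → Euc d × Euc d → ℝ≥0∞ := fun i z => ((‖f i z‖₊ : ℝ≥0∞)) with hgdef
  have hgm : ∀ i, Measurable (g i) := fun i => (hf i).nnnorm.coe_nnreal_ennreal
  set G : Euc d × Euc d → ℝ≥0∞ := fun z => ∑ i, g i z ^ (2:ℝ) with hGdef
  set K : Euc d × Euc d → ℝ≥0∞ := fun z => ∑ i, g i z ^ t with hKdef
  -- Step 1: rewrite the LHS in terms of G
  have step1 : mixedNorm d (px / 2) (pv / 2) (fun z => ∑ i, (f i z) ^ 2)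
      = mixedNormE d (px / 2) (pv / 2) G := by
    unfold mixedNorm
    congr 1
    funext z
    have h1 : (0:ℝ) ≤ ∑ i, (f i z) ^ 2 := Finset.sum_nonneg fun i _ => sq_nonneg _
    rw [show ((‖∑ i, (f i z) ^ 2‖₊ : ℝ≥0∞)) = ENNReal.ofReal (∑ i, (f i z) ^ 2) from Real.enorm_eq_ofReal h1, ENNReal.ofReal_sum_of_nonneg (fun i _ => sq_nonneg _)]
    refine Finset.sum_congr rfl fun i _ => ?_
    calc ENNReal.ofReal ((f i z) ^ 2) = ENNReal.ofReal (|f i z| ^ 2) := by rw [sq_abs]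
      _ = ENNReal.ofReal |f i z| ^ (2:ℕ) := ENNReal.ofReal_pow (abs_nonneg _) 2
      _ = ((‖f i z‖₊ : ℝ≥0∞)) ^ (2:ℕ) := by
          rw [← Real.enorm_eq_ofReal_abs]; rfl
      _ = g i z ^ (2:ℝ) := by
          rw [hgdef, ← ENNReal.rpow_natCast]
          norm_num
  set M : (Euc d × Euc d → ℝ≥0∞) → ℝ≥0∞ := mixedNormE d px pv with hMdef
  set H : Euc d × Euc d → ℝ≥0∞ := fun z => G z ^ ((2:ℝ)⁻¹) with hHdef
  -- Step 2: mixedNormE (p/2) G = (M H)^2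
  have key1 : mixedNormE d (px / 2) (pv / 2) G = (M H) ^ (2:ℝ) := by
    have e1 := mixedNormE_rpow d px pv (2:ℝ≥0∞)⁻¹ (by norm_num) (by norm_num) G
    have hc : ((2:ℝ≥0∞)⁻¹).toReal = (2:ℝ)⁻¹ := by
      rw [ENNReal.toReal_inv]; norm_num
    rw [hc] at e1
    have hmul : px * (2:ℝ≥0∞)⁻¹ = px / 2 := by rw [ENNReal.div_eq_inv_mul, mul_comm]
    have hmul' : pv * (2:ℝ≥0∞)⁻¹ = pv / 2 := by rw [ENNReal.div_eq_inv_mul, mul_comm]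
    rw [hmul, hmul'] at e1
    -- e1 : M (fun z => G z ^ 2⁻¹) = mixedNormE d (px/2) (pv/2) G ^ 2⁻¹
    have : (mixedNormE d (px / 2) (pv / 2) G) =
        ((mixedNormE d (px / 2) (pv / 2) G) ^ ((2:ℝ)⁻¹)) ^ (2:ℝ) := by
      rw [← ENNReal.rpow_mul]
      norm_num
    rw [this, ← e1]
  -- Step 3: pointwise bound H ≤ K^(1/t)
  have hpoint : ∀ z, H z ≤ K z ^ t⁻¹ := by
    intro z
    have h1 : G z ≤ K z ^ (2 / t) := by
      have he : ∀ i : Fin N, g i z ^ (2:ℝ) = (g i z ^ t) ^ (2 / t) := by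
        intro i
        rw [← ENNReal.rpow_mul]
        congr 1
        field_simp
        try ring
      calc G z = ∑ i, (g i z ^ t) ^ (2 / t) := Finset.sum_congr rfl fun i _ => he i
        _ ≤ (∑ i, g i z ^ t) ^ (2 / t) :=
            sum_rpow_le_rpow_sum' _ _ ((one_le_div ht0).mpr ht2)
    calc H z ≤ (K z ^ (2 / t)) ^ ((2:ℝ)⁻¹) :=
          ENNReal.rpow_le_rpow h1 (by norm_num)
      _ = K z ^ t⁻¹ := by
          rw [← ENNReal.rpow_mul]
          congr 1
          field_simp
          try ring
  -- Step 4: M (K^(1/t)) = (mixedNormE (p/Q) K)^(1/t)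
  have key2 : M (fun z => K z ^ t⁻¹) = (mixedNormE d (px / Q) (pv / Q) K) ^ t⁻¹ := by
    have e2 := mixedNormE_rpow d px pv Q⁻¹ (ENNReal.inv_ne_zero.mpr hQtop)
      (ENNReal.inv_ne_top.mpr hQ0) K
    have hc : (Q⁻¹).toReal = t⁻¹ := by rw [ENNReal.toReal_inv]
    rw [hc] at e2
    have hx : px * Q⁻¹ = px / Q := by rw [ENNReal.div_eq_inv_mul, mul_comm]
    have hv : pv * Q⁻¹ = pv / Q := by rw [ENNReal.div_eq_inv_mul, mul_comm]
    rw [hx, hv] at e2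
    exact e2
  -- Step 5: triangle inequality
  have hP1 : 1 ≤ px / Q := by
    rw [ENNReal.le_div_iff_mul_le (Or.inl hQ0) (Or.inl hQtop), one_mul]
    exact hQpx
  have hP2 : 1 ≤ pv / Q := by
    rw [ENNReal.le_div_iff_mul_le (Or.inl hQ0) (Or.inl hQtop), one_mul]
    exact hQpv
  have key3 : ∀ i : Fin N,
      mixedNormE d (px / Q) (pv / Q) (fun z => g i z ^ t) = (M (g i)) ^ t := by
    intro i
    have e3 := mixedNormE_rpow d (px / Q) (pv / Q) Q hQ0 hQtop (g i)
    rwa [ENNReal.div_mul_cancel hQ0 hQtop, ENNReal.div_mul_cancel hQ0 hQtop] at e3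
  have step5 : mixedNormE d (px / Q) (pv / Q) K ≤ ∑ i, (M (g i)) ^ t := by
    calc mixedNormE d (px / Q) (pv / Q) K
        ≤ ∑ i, mixedNormE d (px / Q) (pv / Q) (fun z => g i z ^ t) :=
          mixedNormE_sum_le d _ _ hP1 hP2 Finset.univ _ (fun i => (hgm i).pow_const t)
      _ = ∑ i, (M (g i)) ^ t := Finset.sum_congr rfl fun i _ => key3 i
  -- Assemble
  have hRHS : ∀ i : Fin N, mixedNorm d px pv (f i) = M (g i) := fun i => rfl
  calc mixedNorm d (px / 2) (pv / 2) (fun z => ∑ i, (f i z) ^ 2)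
      = (M H) ^ (2:ℝ) := by rw [step1, key1]
    _ ≤ ((mixedNormE d (px / Q) (pv / Q) K) ^ t⁻¹) ^ (2:ℝ) := by
        refine ENNReal.rpow_le_rpow ?_ (by norm_num)
        have h := mixedNormE_mono d px pv hpoint
        exact h.trans_eq key2
    _ ≤ ((∑ i, (M (g i)) ^ t) ^ t⁻¹) ^ (2:ℝ) := by
        refine ENNReal.rpow_le_rpow (ENNReal.rpow_le_rpow step5 (by positivity)) (by norm_num)
    _ = (∑ i, (M (g i)) ^ t) ^ (2 / t) := by
        rw [← ENNReal.rpow_mul]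
        congr 1
        rw [div_eq_mul_inv, mul_comm]
    _ = (∑ i, mixedNorm d px pv (f i) ^ (min px (min pv 2)).toReal) ^
          (2 / (min px (min pv 2)).toReal) := by
        rw [← hQdef, ← htdef]
        congr 1
end
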